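/- arXiv:2407.07508 — 4 statements merged into one kernel-verified Lean document; each statement's English description precedes it below -/
import Mathlib

section
/- Let (α_n)_{n≥0} be any sequence of nonzero complex numbers, with the convention α_{-1} = -1. Then for all nonnegative integers n, r, and s, Σ_{p ∈ Sch_{n,r,s}} wt_S(p) = Σ_{q ∈ 𝔏_{n,r,s}} wt_L(q). -/
open Polynomial LaurentPolynomial Finset

noncomputable section

/-- Extension of the Verblunsky coefficients to integer indices, with the
convention `α₋₁ = -1` (and junk value `-1` for all negative indices). -/
def az (α : ℕ → ℂ) (k : ℤ) : ℂ := if 0 ≤ k then α k.toNat else -1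

/-- The monic OPUC `Φ_n` defined by Szegő's recurrence
`Φ_{n+1}(z) = z·Φ_n(z) - conj(α_n)·Φ_n^*(z)`, where `Φ_n^*` is the reverse
polynomial `reflect n (map conj Φ_n)`. -/
def szego (α : ℕ → ℂ) : ℕ → Polynomial ℂ
  | 0 => 1
  | n + 1 =>
      Polynomial.X * szego α n -
        Polynomial.C ((starRingEnd ℂ) (α n)) *
          Polynomial.reflect n ((szego α n).map (starRingEnd ℂ))

/-- `f̄(1/z)` as a Laurent polynomial, for a polynomial `f`. -/
def polyBarInv (f : Polynomial ℂ) : LaurentPolynomial ℂ :=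
  f.sum fun k c => LaurentPolynomial.C ((starRingEnd ℂ) c) * LaurentPolynomial.T (-(k : ℤ))

/-- `f̄(1/z)` as a Laurent polynomial, for a Laurent polynomial `f`. -/
def laurentBarInv (f : LaurentPolynomial ℂ) : LaurentPolynomial ℂ :=
  Finsupp.sum f.coeff fun k c => LaurentPolynomial.C ((starRingEnd ℂ) c) * LaurentPolynomial.T (-k)

/-- The generalized moment `μ_{n,r,s} = ⟨Φ_s(z), z^n·Φ_r(z)⟩ / ⟨Φ_s(z), Φ_s(z)⟩`,
where `⟨f,g⟩ = L(f(z)·ḡ(1/z))` and `⟨Φ_s, Φ_s⟩ = ∏_{j<s} (1 - |α_j|²)`. -/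
def genMom (L : LaurentPolynomial ℂ →ₗ[ℂ] ℂ) (α : ℕ → ℂ) (n : ℤ) (r s : ℕ) : ℂ :=
  L (Polynomial.toLaurent (szego α s) *
      laurentBarInv (LaurentPolynomial.T n * Polynomial.toLaurent (szego α r))) /
    ∏ j ∈ Finset.range s, ((1 - Complex.normSq (α j) : ℝ) : ℂ)

/-- `IsLatticePath S p l q` : the list of steps `l`, starting at `p`, forms a lattice
path from `p` to `q` lying weakly above the x-axis, each step `st` taken from a
position `x` satisfying the (possibly position-dependent) step condition `S x st`. -/
def IsLatticePath (S : ℤ × ℤ → ℤ × ℤ → Prop) : ℤ × ℤ → List (ℤ × ℤ) → ℤ × ℤ → Prop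
  | p, [], q => p = q ∧ 0 ≤ p.2
  | p, st :: rest, q => 0 ≤ p.2 ∧ S p st ∧ IsLatticePath S (p + st) rest q

/-- The weight of a path: the product of the weights of its steps, where the weight
of a step may depend on its starting position. -/
def pathWeight (w : ℤ × ℤ → ℤ × ℤ → ℂ) : ℤ × ℤ → List (ℤ × ℤ) → ℂ
  | _, [] => 1
  | p, st :: rest => w p st * pathWeight w (p + st) rest

/-- Łukasiewicz steps: `(1, k)` with `k ≤ 1`. -/
def lukaStep (_p st : ℤ × ℤ) : Prop := st.1 = 1 ∧ st.2 ≤ 1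

/-- Łukasiewicz step weights: an up-step has weight `1`, and a step
`(a,b) → (a+1,b-k)` (`0 ≤ k ≤ b`) has weight
`-α_b·conj(α_{b-k-1})·∏_{j=b-k}^{b-1} (1-|α_j|²)`. -/
def wtLstep (α : ℕ → ℂ) (p st : ℤ × ℤ) : ℂ :=
  if st.2 = 1 then 1
  else
    -(az α p.2) * (starRingEnd ℂ) (az α (p.2 + st.2 - 1)) *
      ∏ j ∈ Finset.Ico (p.2 + st.2) p.2, ((1 - Complex.normSq (az α j) : ℝ) : ℂ)

/-- Gentle Motzkin steps: `(1,1)` (only at even `a+b`), `(1,0)`, `(1,-1)` (only at odd `a+b`). -/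
def gentleStep (p st : ℤ × ℤ) : Prop :=
  (st = (1, 1) ∧ Even (p.1 + p.2)) ∨ st = (1, 0) ∨ (st = (1, -1) ∧ Odd (p.1 + p.2))

/-- Gentle Motzkin step weights. -/
def wtMstep (α : ℕ → ℂ) (p st : ℤ × ℤ) : ℂ :=
  if st = (1, 1) then 1
  else if st = (1, -1) then ((1 - Complex.normSq (az α (p.2 - 1)) : ℝ) : ℂ)
  else if Even (p.1 + p.2) then az α p.2
  else -(starRingEnd ℂ) (az α (p.2 - 1))

/-- Schröder steps: `(1,1)`, `(1,0)`, `(0,-1)`. -/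
def schStep (_p st : ℤ × ℤ) : Prop := st = (1, 1) ∨ st = (1, 0) ∨ st = (0, -1)

/-- Schröder step weights. -/
def wtSstep (α : ℕ → ℂ) (p st : ℤ × ℤ) : ℂ :=
  if st = (1, 1) then 1
  else if st = (1, 0) then -((starRingEnd ℂ) (az α (p.2 - 1)) / (starRingEnd ℂ) (az α p.2))
  else
    ((starRingEnd ℂ) (az α (p.2 - 2)) / (starRingEnd ℂ) (az α (p.2 - 1))) *
      ((1 - Complex.normSq (az α (p.2 - 1)) : ℝ) : ℂ)



section SchLukaProof

variable {S : ℤ × ℤ → ℤ × ℤ → Prop} {w : ℤ × ℤ → ℤ × ℤ → ℂ}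

lemma ilp_nil_iff {p q : ℤ × ℤ} : IsLatticePath S p [] q ↔ p = q ∧ 0 ≤ p.2 := Iff.rfl

lemma ilp_cons_iff {p q st : ℤ × ℤ} {l : List (ℤ × ℤ)} :
    IsLatticePath S p (st :: l) q ↔ 0 ≤ p.2 ∧ S p st ∧ IsLatticePath S (p + st) l q := Iff.rfl

lemma ilp_start_nonneg {p q : ℤ × ℤ} {l : List (ℤ × ℤ)} (h : IsLatticePath S p l q) :
    0 ≤ p.2 := by
  cases l with
  | nil => exact h.2
  | cons a t => exact h.1

lemma ilp_end_nonneg {l : List (ℤ × ℤ)} : ∀ {p q : ℤ × ℤ}, IsLatticePath S p l q → 0 ≤ q.2 := by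
  induction l with
  | nil => intro p q h; rw [← h.1]; exact h.2
  | cons a t ih => intro p q h; exact ih h.2.2

lemma pathWeight_nil {p : ℤ × ℤ} : pathWeight w p [] = 1 := rfl

lemma pathWeight_cons {p st : ℤ × ℤ} {l : List (ℤ × ℤ)} :
    pathWeight w p (st :: l) = w p st * pathWeight w (p + st) l := rfl

/-- Lists of bounded length with entries in a finite set form a finite set. -/
lemma finite_lists (F : Finset (ℤ × ℤ)) :
    ∀ N : ℕ, {l : List (ℤ × ℤ) | l.length ≤ N ∧ ∀ st ∈ l, st ∈ F}.Finite := by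
  intro N
  induction N with
  | zero =>
      apply Set.Finite.subset (Set.finite_singleton ([] : List (ℤ × ℤ)))
      rintro l ⟨h1, -⟩
      simp only [Set.mem_singleton_iff]
      exact (List.length_eq_zero_iff.mp (Nat.le_zero.mp h1)).symm ▸ rfl
  | succ N ih =>
      have hsub : {l : List (ℤ × ℤ) | l.length ≤ N + 1 ∧ ∀ st ∈ l, st ∈ F} ⊆
          insert ([] : List (ℤ × ℤ))
            (⋃ st ∈ (F : Set (ℤ × ℤ)),
              (fun t => st :: t) '' {l : List (ℤ × ℤ) | l.length ≤ N ∧ ∀ st ∈ l, st ∈ F}) := by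
        rintro l ⟨h1, h2⟩
        cases l with
        | nil => exact Set.mem_insert _ _
        | cons a t =>
            apply Set.mem_insert_of_mem
            refine Set.mem_biUnion (h2 a List.mem_cons_self) ⟨t, ⟨?_, ?_⟩, rfl⟩
            · simpa using Nat.lt_succ_iff.mp (Nat.lt_of_lt_of_le (Nat.lt_succ_self _) h1)
            · exact fun st hst => h2 st (List.mem_cons_of_mem _ hst)
      refine Set.Finite.subset ?_ hsub
      apply Set.Finite.insert
      exact Set.Finite.biUnion F.finite_toSet fun st _ => ih.image _

lemma finite_paths {p q : ℤ × ℤ} (N : ℕ) (F : Finset (ℤ × ℤ))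
    (hL : ∀ l, IsLatticePath S p l q → l.length ≤ N)
    (hF : ∀ l, IsLatticePath S p l q → ∀ st ∈ l, st ∈ F) :
    {l : List (ℤ × ℤ) | IsLatticePath S p l q}.Finite := by
  apply Set.Finite.subset (finite_lists F N)
  exact fun l hl => ⟨hL l hl, hF l hl⟩

/-- Peeling off a prescribed first step. -/
lemma psum_head (w : ℤ × ℤ → ℤ × ℤ → ℂ) {p q st₀ : ℤ × ℤ} (h0 : 0 ≤ p.2) (hS : S p st₀)
    (hfin : {l : List (ℤ × ℤ) | IsLatticePath S (p + st₀) l q}.Finite) :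
    (∑ᶠ l ∈ {l : List (ℤ × ℤ) | IsLatticePath S p l q ∧ l.head? = some st₀},
        pathWeight w p l)
      = w p st₀ *
        ∑ᶠ l ∈ {l : List (ℤ × ℤ) | IsLatticePath S (p + st₀) l q},
          pathWeight w (p + st₀) l := by
  have hset : {l : List (ℤ × ℤ) | IsLatticePath S p l q ∧ l.head? = some st₀}
      = (fun t => st₀ :: t) '' {l : List (ℤ × ℤ) | IsLatticePath S (p + st₀) l q} := by
    ext l
    constructor
    · rintro ⟨hl, hh⟩
      cases l with
      | nil => simp at hh
      | cons a t =>
          simp only [List.head?_cons, Option.some.injEq] at hh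
          subst hh
          exact ⟨t, hl.2.2, rfl⟩
    · rintro ⟨t, ht, rfl⟩
      exact ⟨⟨h0, hS, ht⟩, rfl⟩
  rw [hset, finsum_mem_image (fun a _ b _ h => by simpa using h)]
  simp only [pathWeight_cons]
  rw [finsum_mem_eq_finite_toFinset_sum _ hfin, finsum_mem_eq_finite_toFinset_sum _ hfin,
    Finset.mul_sum]

/-- Splitting a path sum according to the first step, over a finite set of
possible first steps. -/
lemma psum_split (w : ℤ × ℤ → ℤ × ℤ → ℂ) {p q : ℤ × ℤ} (sts : Finset (ℤ × ℤ))
    (hfin : {l : List (ℤ × ℤ) | IsLatticePath S p l q}.Finite)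
    (hh : ∀ l, IsLatticePath S p l q → ∃ st ∈ sts, l.head? = some st) :
    (∑ᶠ l ∈ {l : List (ℤ × ℤ) | IsLatticePath S p l q}, pathWeight w p l)
      = ∑ st ∈ sts,
          ∑ᶠ l ∈ {l : List (ℤ × ℤ) | IsLatticePath S p l q ∧ l.head? = some st},
            pathWeight w p l := by
  classical
  rw [finsum_mem_eq_finite_toFinset_sum _ hfin]
  rw [← Finset.sum_fiberwise_of_maps_to (g := fun l : List (ℤ × ℤ) => l.head?.getD (0, 0))
    (t := sts) ?_ (fun l => pathWeight w p l)]
  · apply Finset.sum_congr rfl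
    intro st _
    have hfin2 : {l : List (ℤ × ℤ) | IsLatticePath S p l q ∧ l.head? = some st}.Finite :=
      hfin.subset fun l hl => hl.1
    rw [finsum_mem_eq_finite_toFinset_sum _ hfin2]
    apply Finset.sum_congr _ (fun _ _ => rfl)
    ext l
    simp only [Finset.mem_filter, Set.Finite.mem_toFinset, Set.mem_setOf_eq]
    constructor
    · rintro ⟨hl, hgl⟩
      obtain ⟨st', hst', hh'⟩ := hh l hl
      rw [hh'] at hgl ⊢
      simp only [Option.getD_some] at hgl
      exact ⟨hl, by rw [hgl]⟩
    · rintro ⟨hl, hh'⟩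
      rw [hh']
      exact ⟨hl, rfl⟩
  · intro l hl
    rw [Set.Finite.mem_toFinset] at hl
    obtain ⟨st', hst', hh'⟩ := hh l hl
    show l.head?.getD (0, 0) ∈ sts
    rw [hh']
    simpa using hst'

end SchLukaProof


section SchLukaProof2

lemma luka_length {l : List (ℤ × ℤ)} : ∀ {p q : ℤ × ℤ}, IsLatticePath lukaStep p l q →
    (l.length : ℤ) = q.1 - p.1 := by
  induction l with
  | nil => intro p q h; rw [h.1]; simp
  | cons a t ih =>
      intro p q h
      have h1 : a.1 = 1 := h.2.1.1
      have h2 := ih h.2.2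
      rw [Prod.fst_add, h1] at h2
      rw [List.length_cons]
      push_cast
      omega

lemma luka_bound {l : List (ℤ × ℤ)} : ∀ {p q : ℤ × ℤ}, IsLatticePath lukaStep p l q →
    ∀ st ∈ l, st.1 = 1 ∧ -(p.2 + (l.length : ℤ)) ≤ st.2 ∧ st.2 ≤ 1 := by
  induction l with
  | nil => intro p q h st hst; simp at hst
  | cons a t ih =>
      intro p q h st hst
      obtain ⟨h0, ⟨ha1, ha2⟩, ht⟩ := h
      have hnext : 0 ≤ p.2 + a.2 := by
        have := ilp_start_nonneg ht
        rwa [Prod.snd_add] at this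
      rcases List.mem_cons.mp hst with rfl | hst'
      · refine ⟨ha1, ?_, ha2⟩
        simp only [List.length_cons]
        push_cast
        omega
      · obtain ⟨g1, g2, g3⟩ := ih ht st hst'
        refine ⟨g1, ?_, g3⟩
        rw [Prod.snd_add] at g2
        simp only [List.length_cons]
        push_cast at g2 ⊢
        omega

lemma luka_finite (p q : ℤ × ℤ) :
    {l : List (ℤ × ℤ) | IsLatticePath lukaStep p l q}.Finite := by
  apply finite_paths (q.1 - p.1).toNat
      (({1} : Finset ℤ) ×ˢ Finset.Icc (-(p.2 + ((q.1 - p.1).toNat : ℤ))) 1)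
  · intro l hl
    have := luka_length hl
    omega
  · intro l hl st hst
    obtain ⟨g1, g2, g3⟩ := luka_bound hl st hst
    have hlen := luka_length hl
    simp only [Finset.mem_product, Finset.mem_singleton, Finset.mem_Icc]
    refine ⟨g1, ?_, g3⟩
    omega

lemma sch_length {l : List (ℤ × ℤ)} : ∀ {p q : ℤ × ℤ}, IsLatticePath schStep p l q →
    (l.length : ℤ) ≤ 2 * (q.1 - p.1) - (q.2 - p.2) := by
  induction l with
  | nil => intro p q h; rw [h.1]; simp
  | cons a t ih =>
      intro p q h
      obtain ⟨h0, ha, ht⟩ := h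
      have h2 := ih ht
      rw [List.length_cons]
      rcases ha with rfl | rfl | rfl <;>
        · simp only [Prod.fst_add, Prod.snd_add] at h2
          norm_num at h2
          push_cast
          omega

lemma sch_mono {l : List (ℤ × ℤ)} : ∀ {p q : ℤ × ℤ}, IsLatticePath schStep p l q →
    p.1 ≤ q.1 := by
  induction l with
  | nil => intro p q h; rw [h.1]
  | cons a t ih =>
      intro p q h
      obtain ⟨h0, ha, ht⟩ := h
      have h2 := ih ht
      rcases ha with rfl | rfl | rfl <;>
        · simp only [Prod.fst_add] at h2
          norm_num at h2
          omega

lemma sch_steps_mem {l : List (ℤ × ℤ)} : ∀ {p q : ℤ × ℤ}, IsLatticePath schStep p l q →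
    ∀ st ∈ l, st ∈ ({(1, 1), (1, 0), (0, -1)} : Finset (ℤ × ℤ)) := by
  induction l with
  | nil => intro p q h st hst; simp at hst
  | cons a t ih =>
      intro p q h st hst
      rcases List.mem_cons.mp hst with rfl | hst'
      · rcases h.2.1 with rfl | rfl | rfl <;> simp
      · exact ih h.2.2 st hst'

lemma sch_finite (p q : ℤ × ℤ) :
    {l : List (ℤ × ℤ) | IsLatticePath schStep p l q}.Finite := by
  apply finite_paths (2 * (q.1 - p.1) + p.2).toNat ({(1, 1), (1, 0), (0, -1)} : Finset (ℤ × ℤ))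
  · intro l hl
    have h1 := sch_length hl
    have h2 := ilp_end_nonneg hl
    omega
  · intro l hl st hst
    exact sch_steps_mem hl st hst

/-- Łukasiewicz transfer matrix recursion. -/
def lukaF (α : ℕ → ℂ) : ℕ → ℕ → ℕ → ℂ
  | 0, r, s => if r = s then 1 else 0
  | n + 1, r, s =>
      ∑ h ∈ Finset.range (r + 2), wtLstep α (0, (r : ℤ)) (1, (h : ℤ) - (r : ℤ)) * lukaF α n h s

/-- Weight of a vertical Schröder step from height `t`. -/
def vstep (α : ℕ → ℂ) (t : ℤ) : ℂ := wtSstep α (0, t) (0, -1)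

/-- Weight of `j` consecutive vertical steps starting from height `t`. -/
def vprod (α : ℕ → ℂ) (t : ℤ) (j : ℕ) : ℂ := ∏ i ∈ Finset.range j, vstep α (t - (i : ℤ))

/-- Schröder transfer recursion (paths not starting with a vertical step). -/
def schA (α : ℕ → ℂ) : ℕ → ℕ → ℕ → ℂ
  | 0, r, s => if r = s then 1 else 0
  | n + 1, r, s =>
      (∑ j ∈ Finset.range (r + 2), vprod α ((r : ℤ) + 1) j * schA α n (r + 1 - j) s)
        + wtSstep α (0, (r : ℤ)) (1, 0) *
            ∑ j ∈ Finset.range (r + 1), vprod α (r : ℤ) j * schA α n (r - j) s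

/-- Schröder transfer recursion (arbitrary paths). -/
def schB (α : ℕ → ℂ) (n r s : ℕ) : ℂ :=
  ∑ j ∈ Finset.range (r + 1), vprod α (r : ℤ) j * schA α n (r - j) s

lemma schA_succ (α : ℕ → ℂ) (n r s : ℕ) :
    schA α (n + 1) r s = schB α n (r + 1) s + wtSstep α (0, (r : ℤ)) (1, 0) * schB α n r s := by
  rw [schA, schB, schB]
  push_cast
  rfl

lemma vprod_succ (α : ℕ → ℂ) (t : ℤ) (j : ℕ) :
    vprod α t (j + 1) = vstep α t * vprod α (t - 1) j := by
  rw [vprod, Finset.prod_range_succ']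
  simp only [Nat.cast_zero, sub_zero]
  rw [mul_comm, vprod]
  congr 1
  apply Finset.prod_congr rfl
  intro i _
  congr 1
  push_cast
  ring

lemma schB_zero (α : ℕ → ℂ) (n s : ℕ) : schB α n 0 s = schA α n 0 s := by
  simp [schB, vprod]

lemma schB_succ (α : ℕ → ℂ) (n r s : ℕ) :
    schB α n (r + 1) s = schA α n (r + 1) s + vstep α ((r : ℤ) + 1) * schB α n r s := by
  rw [schB, Finset.sum_range_succ']
  simp only [Nat.cast_zero, vprod, Finset.range_zero, Finset.prod_empty, one_mul,
    Nat.add_sub_cancel]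
  rw [add_comm]
  congr 1
  rw [schB, Finset.mul_sum]
  apply Finset.sum_congr rfl
  intro j _
  have h1 : vprod α ((r : ℤ) + 1) (j + 1) = vstep α ((r : ℤ) + 1) * vprod α (r : ℤ) j := by
    have := vprod_succ α ((r : ℤ) + 1) j
    simpa using this
  have h2 : r + 1 - (j + 1) = r - j := by omega
  rw [h2]
  simp only [Nat.cast_add, Nat.cast_one]
  rw [show (∏ i ∈ Finset.range (j + 1), vstep α ((r : ℤ) + 1 - (i : ℤ)))
      = vprod α ((r : ℤ) + 1) (j + 1) from rfl, h1]
  ring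

end SchLukaProof2


section SchLukaProof3

lemma luka_transfer (α : ℕ → ℂ) : ∀ (n : ℕ) (x : ℤ) (r s : ℕ),
    (∑ᶠ l ∈ {l : List (ℤ × ℤ) |
        IsLatticePath lukaStep (x, (r : ℤ)) l (x + (n : ℤ), (s : ℤ))},
      pathWeight (wtLstep α) (x, (r : ℤ)) l) = lukaF α n r s := by
  intro n
  induction n with
  | zero =>
      intro x r s
      have hset : {l : List (ℤ × ℤ) |
            IsLatticePath lukaStep (x, (r : ℤ)) l (x + ((0 : ℕ) : ℤ), (s : ℤ))}
          = if r = s then {([] : List (ℤ × ℤ))} else ∅ := by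
        ext l
        constructor
        · intro hl
          have hlen := luka_length hl
          simp only [Nat.cast_zero, add_zero] at hlen
          have hnil : l = [] := by
            cases l with
            | nil => rfl
            | cons a t => exfalso; rw [List.length_cons] at hlen; push_cast at hlen; omega
          subst hnil
          have h1 : ((x, (r : ℤ)) : ℤ × ℤ) = (x + ((0 : ℕ) : ℤ), (s : ℤ)) := hl.1
          have hrs : (r : ℤ) = (s : ℤ) := congrArg Prod.snd h1
          have hrs' : r = s := by exact_mod_cast hrs
          simp [hrs']
        · intro hl
          by_cases hrs : r = s
          · rw [if_pos hrs] at hl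
            rw [Set.mem_singleton_iff] at hl
            subst hl
            subst hrs
            refine ⟨?_, by positivity⟩
            simp [Prod.ext_iff]
          · rw [if_neg hrs] at hl
            exact absurd hl (Set.notMem_empty l)
      rw [hset, lukaF]
      by_cases hrs : r = s
      · rw [if_pos hrs, if_pos hrs, finsum_mem_singleton, pathWeight_nil]
      · rw [if_neg hrs, if_neg hrs, finsum_mem_empty]
  | succ n ih =>
      intro x r s
      rw [psum_split (wtLstep α)
          ((Finset.range (r + 2)).image (fun h : ℕ => ((1 : ℤ), (h : ℤ) - (r : ℤ))))
          (luka_finite _ _) ?hh]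
      case hh =>
        intro l hl
        cases l with
        | nil =>
            exfalso
            have h1 : ((x, (r : ℤ)) : ℤ × ℤ) = (x + ((n + 1 : ℕ) : ℤ), (s : ℤ)) := hl.1
            have := congrArg Prod.fst h1
            simp only at this
            omega
        | cons a t =>
            refine ⟨a, ?_, rfl⟩
            obtain ⟨h0, ⟨ha1, ha2⟩, ht⟩ := hl
            have hnext : (0 : ℤ) ≤ (r : ℤ) + a.2 := by
              have := ilp_start_nonneg ht
              rwa [Prod.snd_add] at this
            rw [Finset.mem_image]
            refine ⟨((r : ℤ) + a.2).toNat, ?_, ?_⟩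
            · rw [Finset.mem_range]; omega
            · rw [Prod.ext_iff]
              constructor
              · exact ha1.symm
              · show (((r : ℤ) + a.2).toNat : ℤ) - (r : ℤ) = a.2
                omega
      rw [Finset.sum_image (fun h1 _ h2 _ e => by
        have : (h1 : ℤ) - (r : ℤ) = (h2 : ℤ) - (r : ℤ) := congrArg Prod.snd e
        omega)]
      rw [lukaF]
      apply Finset.sum_congr rfl
      intro h hmem
      rw [Finset.mem_range] at hmem
      rw [psum_head (wtLstep α) (Int.natCast_nonneg r)
        (⟨rfl, by omega⟩ : lukaStep (x, (r : ℤ)) ((1 : ℤ), (h : ℤ) - (r : ℤ)))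
        (luka_finite _ _)]
      have hpt : ((x, (r : ℤ)) + ((1 : ℤ), (h : ℤ) - (r : ℤ)) : ℤ × ℤ) = (x + 1, (h : ℤ)) := by
        rw [Prod.mk_add_mk]
        congr 1
        ring
      rw [hpt]
      have hend : x + ((n + 1 : ℕ) : ℤ) = (x + 1) + (n : ℤ) := by push_cast; ring
      rw [hend, ih (x + 1) h s]
      rfl

end SchLukaProof3


section SchLukaProof4

lemma sch_full_split (α : ℕ → ℂ) (x : ℤ) (r : ℕ) (q : ℤ × ℤ) :
    (∑ᶠ l ∈ {l : List (ℤ × ℤ) | IsLatticePath schStep (x, (r : ℤ)) l q},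
        pathWeight (wtSstep α) (x, (r : ℤ)) l)
      = (∑ᶠ l ∈ {l : List (ℤ × ℤ) |
            IsLatticePath schStep (x, (r : ℤ)) l q ∧ l.head? ≠ some (0, -1)},
          pathWeight (wtSstep α) (x, (r : ℤ)) l)
        + (∑ᶠ l ∈ {l : List (ℤ × ℤ) |
            IsLatticePath schStep (x, (r : ℤ)) l q ∧ l.head? = some (0, -1)},
          pathWeight (wtSstep α) (x, (r : ℤ)) l) := by
  classical
  have hset : {l : List (ℤ × ℤ) | IsLatticePath schStep (x, (r : ℤ)) l q}
      = {l : List (ℤ × ℤ) |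
            IsLatticePath schStep (x, (r : ℤ)) l q ∧ l.head? ≠ some (0, -1)}
        ∪ {l : List (ℤ × ℤ) |
            IsLatticePath schStep (x, (r : ℤ)) l q ∧ l.head? = some (0, -1)} := by
    ext l
    constructor
    · intro hl
      by_cases hc : l.head? = some (0, -1)
      · exact Or.inr ⟨hl, hc⟩
      · exact Or.inl ⟨hl, hc⟩
    · rintro (⟨hl, -⟩ | ⟨hl, -⟩) <;> exact hl
  rw [hset, finsum_mem_union ?dis ?f1 ?f2]
  case dis =>
    rw [Set.disjoint_left]
    rintro l ⟨-, h1⟩ ⟨-, h2⟩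
    exact h1 h2
  case f1 => exact (sch_finite _ _).subset fun l hl => hl.1
  case f2 => exact (sch_finite _ _).subset fun l hl => hl.1

lemma sch_vert_empty (x y : ℤ) (hy : y < 1) (q : ℤ × ℤ) :
    {l : List (ℤ × ℤ) | IsLatticePath schStep (x, y) l q ∧ l.head? = some (0, -1)} = ∅ := by
  ext l
  simp only [Set.mem_setOf_eq, Set.mem_empty_iff_false, iff_false, not_and]
  intro hl hh
  cases l with
  | nil => simp at hh
  | cons a t =>
      simp only [List.head?_cons, Option.some.injEq] at hh
      subst hh
      have h2 := ilp_start_nonneg hl.2.2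
      rw [Prod.snd_add] at h2
      simp only at h2
      omega

lemma sch_vert_succ (α : ℕ → ℂ) (x : ℤ) (r : ℕ) (q : ℤ × ℤ) :
    (∑ᶠ l ∈ {l : List (ℤ × ℤ) |
        IsLatticePath schStep (x, (r : ℤ) + 1) l q ∧ l.head? = some (0, -1)},
      pathWeight (wtSstep α) (x, (r : ℤ) + 1) l)
      = vstep α ((r : ℤ) + 1) *
        ∑ᶠ l ∈ {l : List (ℤ × ℤ) | IsLatticePath schStep (x, (r : ℤ)) l q},
          pathWeight (wtSstep α) (x, (r : ℤ)) l := by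
  have hpt : ((x, (r : ℤ) + 1) + ((0 : ℤ), (-1 : ℤ)) : ℤ × ℤ) = (x, (r : ℤ)) := by
    rw [Prod.mk_add_mk]
    congr 1 <;> ring
  have key := psum_head (S := schStep) (wtSstep α) (p := (x, (r : ℤ) + 1)) (q := q)
      (st₀ := ((0 : ℤ), (-1 : ℤ))) (by positivity) (Or.inr (Or.inr rfl))
      (by rw [hpt]; exact sch_finite _ _)
  rw [hpt] at key
  rw [key]
  rfl

lemma sch_A_zero (α : ℕ → ℂ) (x : ℤ) (r s : ℕ) :
    (∑ᶠ l ∈ {l : List (ℤ × ℤ) |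
        IsLatticePath schStep (x, (r : ℤ)) l (x + ((0 : ℕ) : ℤ), (s : ℤ)) ∧
          l.head? ≠ some (0, -1)},
      pathWeight (wtSstep α) (x, (r : ℤ)) l) = schA α 0 r s := by
  have hset : {l : List (ℤ × ℤ) |
        IsLatticePath schStep (x, (r : ℤ)) l (x + ((0 : ℕ) : ℤ), (s : ℤ)) ∧
          l.head? ≠ some (0, -1)}
      = if r = s then {([] : List (ℤ × ℤ))} else ∅ := by
    ext l
    constructor
    · rintro ⟨hl, hh⟩
      cases l with
      | nil =>
          have h1 : ((x, (r : ℤ)) : ℤ × ℤ) = (x + ((0 : ℕ) : ℤ), (s : ℤ)) := hl.1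
          have hrs : (r : ℤ) = (s : ℤ) := congrArg Prod.snd h1
          have hrs' : r = s := by exact_mod_cast hrs
          simp [hrs']
      | cons a t =>
          exfalso
          have hmono := sch_mono hl.2.2
          have ha1 : a.1 = 1 := by
            rcases hl.2.1 with rfl | rfl | rfl
            · rfl
            · rfl
            · exact absurd rfl hh
          rw [Prod.fst_add, ha1] at hmono
          simp only [Nat.cast_zero, add_zero] at hmono
          omega
    · intro hl
      by_cases hrs : r = s
      · rw [if_pos hrs] at hl
        rw [Set.mem_singleton_iff] at hl
        subst hl
        subst hrs
        refine ⟨⟨?_, by positivity⟩, by simp⟩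
        simp [Prod.ext_iff]
      · rw [if_neg hrs] at hl
        exact absurd hl (Set.notMem_empty l)
  rw [hset, schA]
  by_cases hrs : r = s
  · rw [if_pos hrs, if_pos hrs, finsum_mem_singleton, pathWeight_nil]
  · rw [if_neg hrs, if_neg hrs, finsum_mem_empty]

lemma sch_A_succ (α : ℕ → ℂ) (n : ℕ)
    (ihB : ∀ (x : ℤ) (r s : ℕ),
      (∑ᶠ l ∈ {l : List (ℤ × ℤ) |
          IsLatticePath schStep (x, (r : ℤ)) l (x + (n : ℤ), (s : ℤ))},
        pathWeight (wtSstep α) (x, (r : ℤ)) l) = schB α n r s) :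
    ∀ (x : ℤ) (r s : ℕ),
      (∑ᶠ l ∈ {l : List (ℤ × ℤ) |
          IsLatticePath schStep (x, (r : ℤ)) l (x + ((n + 1 : ℕ) : ℤ), (s : ℤ)) ∧
            l.head? ≠ some (0, -1)},
        pathWeight (wtSstep α) (x, (r : ℤ)) l) = schA α (n + 1) r s := by
  intro x r s
  have hset : {l : List (ℤ × ℤ) |
        IsLatticePath schStep (x, (r : ℤ)) l (x + ((n + 1 : ℕ) : ℤ), (s : ℤ)) ∧
          l.head? ≠ some (0, -1)}
      = {l : List (ℤ × ℤ) |
          IsLatticePath schStep (x, (r : ℤ)) l (x + ((n + 1 : ℕ) : ℤ), (s : ℤ)) ∧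
            l.head? = some (1, 1)}
        ∪ {l : List (ℤ × ℤ) |
            IsLatticePath schStep (x, (r : ℤ)) l (x + ((n + 1 : ℕ) : ℤ), (s : ℤ)) ∧
              l.head? = some (1, 0)} := by
    ext l
    constructor
    · rintro ⟨hl, hh⟩
      cases l with
      | nil =>
          exfalso
          have h1 : ((x, (r : ℤ)) : ℤ × ℤ) = (x + ((n + 1 : ℕ) : ℤ), (s : ℤ)) := hl.1
          have := congrArg Prod.fst h1
          simp only at this
          omega
      | cons a t =>
          rcases hl.2.1 with rfl | rfl | rfl
          · exact Or.inl ⟨hl, rfl⟩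
          · exact Or.inr ⟨hl, rfl⟩
          · exact absurd rfl hh
    · rintro (⟨hl, hh⟩ | ⟨hl, hh⟩) <;>
        · refine ⟨hl, ?_⟩
          rw [hh]
          decide
  classical
  rw [hset, finsum_mem_union ?dis ?f1 ?f2]
  case dis =>
    rw [Set.disjoint_left]
    rintro l ⟨-, h1⟩ ⟨-, h2⟩
    rw [h1] at h2
    exact absurd h2 (by decide)
  case f1 => exact (sch_finite _ _).subset fun l hl => hl.1
  case f2 => exact (sch_finite _ _).subset fun l hl => hl.1
  rw [psum_head (wtSstep α) (Int.natCast_nonneg r) (Or.inl rfl) (sch_finite _ _),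
    psum_head (wtSstep α) (Int.natCast_nonneg r) (Or.inr (Or.inl rfl)) (sch_finite _ _)]
  simp only [show ((x, (r : ℤ)) + ((1 : ℤ), (1 : ℤ)) : ℤ × ℤ) = (x + 1, ((r + 1 : ℕ) : ℤ)) from by
      rw [Prod.mk_add_mk, Prod.mk.injEq]; constructor <;> push_cast <;> ring,
    show ((x, (r : ℤ)) + ((1 : ℤ), (0 : ℤ)) : ℤ × ℤ) = (x + 1, (r : ℤ)) from by
      rw [Prod.mk_add_mk, Prod.mk.injEq]; constructor <;> ring,
    show x + ((n + 1 : ℕ) : ℤ) = (x + 1) + (n : ℤ) from by push_cast; ring]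
  rw [ihB (x + 1) (r + 1) s, ihB (x + 1) r s, schA_succ,
    show wtSstep α (x, (r : ℤ)) ((1 : ℤ), (1 : ℤ)) = 1 from if_pos rfl, one_mul]
  rfl

lemma sch_B_from_A (α : ℕ → ℂ) (n s : ℕ) (x : ℤ) (q : ℤ × ℤ)
    (hA : ∀ r : ℕ,
      (∑ᶠ l ∈ {l : List (ℤ × ℤ) |
          IsLatticePath schStep (x, (r : ℤ)) l q ∧ l.head? ≠ some (0, -1)},
        pathWeight (wtSstep α) (x, (r : ℤ)) l) = schA α n r s) :
    ∀ r : ℕ,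
      (∑ᶠ l ∈ {l : List (ℤ × ℤ) | IsLatticePath schStep (x, (r : ℤ)) l q},
        pathWeight (wtSstep α) (x, (r : ℤ)) l) = schB α n r s := by
  intro r
  induction r with
  | zero =>
      rw [sch_full_split, hA 0, sch_vert_empty x ((0 : ℕ) : ℤ) (by norm_num) q,
        finsum_mem_empty, add_zero, schB_zero]
  | succ r ihr =>
      rw [sch_full_split, hA (r + 1)]
      push_cast
      rw [sch_vert_succ, ihr, schB_succ]

end SchLukaProof4


section SchLukaProof5

lemma sch_transfer (α : ℕ → ℂ) : ∀ (n : ℕ),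
    (∀ (x : ℤ) (r s : ℕ),
      (∑ᶠ l ∈ {l : List (ℤ × ℤ) |
          IsLatticePath schStep (x, (r : ℤ)) l (x + (n : ℤ), (s : ℤ)) ∧
            l.head? ≠ some (0, -1)},
        pathWeight (wtSstep α) (x, (r : ℤ)) l) = schA α n r s) ∧
    (∀ (x : ℤ) (r s : ℕ),
      (∑ᶠ l ∈ {l : List (ℤ × ℤ) |
          IsLatticePath schStep (x, (r : ℤ)) l (x + (n : ℤ), (s : ℤ))},
        pathWeight (wtSstep α) (x, (r : ℤ)) l) = schB α n r s) := by
  intro n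
  induction n with
  | zero =>
      exact ⟨fun x r s => sch_A_zero α x r s,
        fun x r s => sch_B_from_A α 0 s x _ (fun r' => sch_A_zero α x r' s) r⟩
  | succ n ih =>
      exact ⟨sch_A_succ α n ih.2,
        fun x r s => sch_B_from_A α (n + 1) s x _ (fun r' => sch_A_succ α n ih.2 x r' s) r⟩

lemma az_ne (α : ℕ → ℂ) (hα0 : ∀ k, α k ≠ 0) (k : ℤ) : az α k ≠ 0 := by
  rw [az]
  split
  · exact hα0 _
  · norm_num

lemma conj_az_ne (α : ℕ → ℂ) (hα0 : ∀ k, α k ≠ 0) (k : ℤ) :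
    (starRingEnd ℂ) (az α k) ≠ 0 := by
  simpa using az_ne α hα0 k

lemma vstep_eq (α : ℕ → ℂ) (t : ℤ) :
    vstep α t = (starRingEnd ℂ) (az α (t - 2)) / (starRingEnd ℂ) (az α (t - 1)) *
      ((1 - Complex.normSq (az α (t - 1)) : ℝ) : ℂ) := rfl

lemma wtS_horiz (α : ℕ → ℂ) (p : ℤ × ℤ) :
    wtSstep α p ((1 : ℤ), (0 : ℤ)) =
      -((starRingEnd ℂ) (az α (p.2 - 1)) / (starRingEnd ℂ) (az α p.2)) := rfl

lemma vprod_eq (α : ℕ → ℂ) (hα0 : ∀ k, α k ≠ 0) (t : ℤ) :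
    ∀ j : ℕ, vprod α t j =
      (starRingEnd ℂ) (az α (t - 1 - (j : ℤ))) / (starRingEnd ℂ) (az α (t - 1)) *
        ∏ i ∈ Finset.range j, ((1 - Complex.normSq (az α (t - 1 - (i : ℤ))) : ℝ) : ℂ) := by
  intro j
  induction j with
  | zero =>
      simp only [vprod, Finset.range_zero, Finset.prod_empty, Nat.cast_zero, sub_zero, mul_one]
      rw [div_self (conj_az_ne α hα0 _)]
  | succ j ih =>
      rw [vprod, Finset.prod_range_succ, ← vprod, ih, vstep_eq]
      have e1 : t - (j : ℤ) - 1 = t - 1 - (j : ℤ) := by ring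
      have e2 : t - (j : ℤ) - 2 = t - 1 - ((j + 1 : ℕ) : ℤ) := by push_cast; ring
      rw [e1, e2, Finset.prod_range_succ]
      have h1 := conj_az_ne α hα0 (t - 1)
      have h2 := conj_az_ne α hα0 (t - 1 - (j : ℤ))
      field_simp

lemma Ico_prod (f : ℤ → ℂ) : ∀ (d : ℕ) (t : ℤ),
    (∏ j ∈ Finset.Ico (t - (d : ℤ)) t, f j) = ∏ i ∈ Finset.range d, f (t - 1 - (i : ℤ)) := by
  intro d
  induction d with
  | zero =>
      intro t
      simp
  | succ d ih =>
      intro t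
      have hins : Finset.Ico (t - ((d + 1 : ℕ) : ℤ)) t
          = insert (t - ((d + 1 : ℕ) : ℤ)) (Finset.Ico (t - (d : ℤ)) t) := by
        ext j
        simp only [Finset.mem_Ico, Finset.mem_insert]
        omega
      rw [hins, Finset.prod_insert (by simp only [Finset.mem_Ico]; omega), ih,
        Finset.prod_range_succ,
        show t - ((d + 1 : ℕ) : ℤ) = t - 1 - (d : ℤ) from by push_cast; ring]
      ring

lemma key_identity (α : ℕ → ℂ) (hα0 : ∀ k, α k ≠ 0) (r h : ℕ) (hh : h ≤ r + 1) :
    wtLstep α (0, (r : ℤ)) ((1 : ℤ), (h : ℤ) - (r : ℤ))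
      = vprod α ((r : ℤ) + 1) (r + 1 - h)
        + (if h = r + 1 then 0
            else wtSstep α (0, (r : ℤ)) ((1 : ℤ), (0 : ℤ)) * vprod α (r : ℤ) (r - h)) := by
  by_cases hcase : h = r + 1
  · subst hcase
    rw [if_pos rfl, add_zero]
    have : r + 1 - (r + 1) = 0 := by omega
    rw [this]
    simp only [vprod, Finset.range_zero, Finset.prod_empty]
    rw [wtLstep, if_pos (by push_cast; ring)]
  · have hhr : h ≤ r := by omega
    rw [if_neg hcase, wtLstep, if_neg (by
      show ¬((1 : ℤ), (h : ℤ) - (r : ℤ)).2 = 1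
      simp only
      omega)]
    simp only
    rw [show (r : ℤ) + ((h : ℤ) - (r : ℤ)) - 1 = (h : ℤ) - 1 from by ring,
      show (r : ℤ) + ((h : ℤ) - (r : ℤ)) = (h : ℤ) from by ring,
      show (h : ℤ) = (r : ℤ) - ((r - h : ℕ) : ℤ) from by omega,
      Ico_prod _ (r - h) (r : ℤ)]
    rw [vprod_eq α hα0 _ (r + 1 - h), vprod_eq α hα0 _ (r - h), wtS_horiz]
    simp only [show (r : ℤ) + 1 - 1 = (r : ℤ) from by ring]
    rw [show (r : ℤ) - ((r + 1 - h : ℕ) : ℤ) = (r : ℤ) - ((r - h : ℕ) : ℤ) - 1 from by omega,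
      show r + 1 - h = (r - h) + 1 from by omega,
      Finset.prod_range_succ']
    simp only [Nat.cast_zero, sub_zero]
    simp only [show ∀ i : ℕ, (r : ℤ) - ((i + 1 : ℕ) : ℤ) = (r : ℤ) - 1 - (i : ℤ) from
      fun i => by push_cast; ring]
    rw [show (r : ℤ) - ((r - h : ℕ) : ℤ) - 1 = (r : ℤ) - 1 - ((r - h : ℕ) : ℤ) from by ring]
    have h1 := conj_az_ne α hα0 ((r : ℤ))
    have h2 := conj_az_ne α hα0 ((r : ℤ) - 1)
    push_cast
    field_simp
    rw [← Complex.mul_conj (az α (r : ℤ))]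
    ring

end SchLukaProof5


section SchLukaProof6

lemma lukaF_eq_schA (α : ℕ → ℂ) (hα0 : ∀ k, α k ≠ 0) :
    ∀ n r s : ℕ, lukaF α n r s = schA α n r s := by
  intro n
  induction n with
  | zero => intro r s; rfl
  | succ n ih =>
      intro r s
      rw [lukaF, schA]
      have hre1 : (∑ j ∈ Finset.range (r + 2), vprod α ((r : ℤ) + 1) j * schA α n (r + 1 - j) s)
          = ∑ h ∈ Finset.range (r + 2), vprod α ((r : ℤ) + 1) (r + 1 - h) * schA α n h s := by
        rw [← Finset.sum_range_reflect
          (fun h => vprod α ((r : ℤ) + 1) (r + 1 - h) * schA α n h s) (r + 2)]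
        apply Finset.sum_congr rfl
        intro j hj
        rw [Finset.mem_range] at hj
        rw [show r + 2 - 1 - j = r + 1 - j from by omega,
          show r + 1 - (r + 1 - j) = j from by omega]
      have hre2 : (∑ j ∈ Finset.range (r + 1), vprod α (r : ℤ) j * schA α n (r - j) s)
          = ∑ h ∈ Finset.range (r + 1), vprod α (r : ℤ) (r - h) * schA α n h s := by
        rw [← Finset.sum_range_reflect
          (fun h => vprod α (r : ℤ) (r - h) * schA α n h s) (r + 1)]
        apply Finset.sum_congr rfl
        intro j hj
        rw [Finset.mem_range] at hj
        rw [show r + 1 - 1 - j = r - j from by omega,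
          show r - (r - j) = j from by omega]
      rw [hre1, hre2]
      have hext : (∑ h ∈ Finset.range (r + 1), vprod α (r : ℤ) (r - h) * schA α n h s)
          = ∑ h ∈ Finset.range (r + 2),
              (if h = r + 1 then 0 else vprod α (r : ℤ) (r - h) * schA α n h s) := by
        rw [Finset.sum_range_succ
          (fun h => if h = r + 1 then 0 else vprod α (r : ℤ) (r - h) * schA α n h s) (r + 1),
          if_pos rfl, add_zero]
        apply Finset.sum_congr rfl
        intro h hmem
        rw [Finset.mem_range] at hmem
        rw [if_neg (by omega)]
      rw [hext, Finset.mul_sum, ← Finset.sum_add_distrib]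
      apply Finset.sum_congr rfl
      intro h hmem
      rw [Finset.mem_range] at hmem
      rw [ih h s, key_identity α hα0 r h (by omega), add_mul]
      congr 1
      by_cases hc : h = r + 1
      · rw [if_pos hc, if_pos hc, zero_mul, mul_zero]
      · rw [if_neg hc, if_neg hc]
        ring

end SchLukaProof6

/-- for any sequence of nonzero complex numbers `α` (with the
convention `α₋₁ = -1`), the Schröder path weight sum equals the Łukasiewicz path
weight sum. -/
theorem schroeder_eq_luka (α : ℕ → ℂ) (hα0 : ∀ k, α k ≠ 0) (n r s : ℕ) :
    (∑ᶠ p ∈ {l : List (ℤ × ℤ) |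
        IsLatticePath schStep (0, (r : ℤ)) l ((n : ℤ), (s : ℤ)) ∧
          l.head? ≠ some (0, -1)},
      pathWeight (wtSstep α) (0, (r : ℤ)) p) =
    ∑ᶠ q ∈ {l : List (ℤ × ℤ) |
        IsLatticePath lukaStep (0, (r : ℤ)) l ((n : ℤ), (s : ℤ))},
      pathWeight (wtLstep α) (0, (r : ℤ)) q := by
  have hS := (sch_transfer α n).1 0 r s
  have hL := luka_transfer α n 0 r s
  simp only [zero_add] at hS hL
  rw [hS, hL]
  exact ((lukaF_eq_schA α hα0 n r s).trans rfl).symm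

end
end

section
/- For all nonnegative integers n, r, and s, there is a multivariate polynomial P in the 2(n+r) variables x_0, …, x_{n+r-1}, y_0, …, y_{n+r-1} with nonnegative integer coefficients such that μ_{n,r,s} = P(α_0, …, α_{n+r-1}, -conj(α_0), …, -conj(α_{n+r-1})). In particular, μ_{n,r,s} is a polynomial with integer coefficients in the quantities α_j and conj(α_j) for 0 ≤ j < n+r. -/
open Polynomial LaurentPolynomial Finset

noncomputable section

/-! ### Auxiliary machinery -/

/-- `Φ_n^*`, the reversed conjugate polynomial. -/
def phs (α : ℕ → ℂ) (n : ℕ) : Polynomial ℂ :=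
  Polynomial.reflect n ((szego α n).map (starRingEnd ℂ))

lemma szego_succ (α : ℕ → ℂ) (n : ℕ) :
    szego α (n + 1) = Polynomial.X * szego α n
      - Polynomial.C ((starRingEnd ℂ) (α n)) * phs α n := rfl

lemma szego_zero (α : ℕ → ℂ) : szego α 0 = 1 := rfl

/-- `polyBarInv` as a ring hom. -/
def BIH : Polynomial ℂ →+* LaurentPolynomial ℂ :=
  Polynomial.eval₂RingHom ((LaurentPolynomial.C).comp (starRingEnd ℂ)) (T (-1))

lemma polyBarInv_eq (f : Polynomial ℂ) : polyBarInv f = BIH f := by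
  rw [BIH, coe_eval₂RingHom, Polynomial.eval₂_eq_sum, polyBarInv, Polynomial.sum_def,
    Polynomial.sum_def]
  refine Finset.sum_congr rfl ?_
  intro k _
  rw [RingHom.comp_apply, T_pow]
  norm_num

lemma BIH_C (c : ℂ) : BIH (Polynomial.C c) = LaurentPolynomial.C ((starRingEnd ℂ) c) := by
  rw [BIH, coe_eval₂RingHom, Polynomial.eval₂_C, RingHom.comp_apply]

lemma BIH_X : BIH (Polynomial.X) = T (-1) := by
  rw [BIH, coe_eval₂RingHom, eval₂_X]

lemma BIH_X_pow (k : ℕ) : BIH (Polynomial.X ^ k : Polynomial ℂ) = T (-(k:ℤ)) := by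
  rw [BIH, coe_eval₂RingHom, eval₂_X_pow, T_pow]
  norm_num

lemma polyBarInv_add (f g : Polynomial ℂ) :
    polyBarInv (f + g) = polyBarInv f + polyBarInv g := by
  simp [polyBarInv_eq]

lemma polyBarInv_one : polyBarInv 1 = 1 := by simp [polyBarInv_eq]

lemma polyBarInv_C_mul (a : ℂ) (f : Polynomial ℂ) :
    polyBarInv (Polynomial.C a * f) = LaurentPolynomial.C ((starRingEnd ℂ) a) * polyBarInv f := by
  simp [polyBarInv_eq, BIH]

lemma polyBarInv_X_mul (f : Polynomial ℂ) :
    polyBarInv (Polynomial.X * f) = T (-1) * polyBarInv f := by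
  simp [polyBarInv_eq, BIH]

lemma laurentBarInv_add (f g : LaurentPolynomial ℂ) :
    laurentBarInv (f + g) = laurentBarInv f + laurentBarInv g := by
  rw [laurentBarInv, laurentBarInv, laurentBarInv, AddMonoidAlgebra.coeff_add]
  refine Finsupp.sum_add_index ?_ ?_
  · intro k _; simp
  · intro k _ a b; rw [map_add, map_add, add_mul]

lemma laurentBarInv_single (n : ℤ) (a : ℂ) :
    laurentBarInv (AddMonoidAlgebra.single n a : LaurentPolynomial ℂ)
      = LaurentPolynomial.C ((starRingEnd ℂ) a) * T (-n) := by
  rw [laurentBarInv, AddMonoidAlgebra.coeff_single, Finsupp.sum_single_index]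
  simp

lemma laurentBarInv_T_mul_toLaurent (n : ℤ) (f : Polynomial ℂ) :
    laurentBarInv (T n * Polynomial.toLaurent f) = T (-n) * polyBarInv f := by
  induction f using Polynomial.induction_on' with
  | add p q hp hq =>
      rw [map_add, mul_add, laurentBarInv_add, hp, hq, polyBarInv_add, mul_add]
  | monomial k a =>
      rw [← C_mul_X_pow_eq_monomial, Polynomial.toLaurent_C_mul_X_pow, polyBarInv_C_mul]
      rw [show (T n : LaurentPolynomial ℂ) * (LaurentPolynomial.C a * T (k:ℤ))
            = LaurentPolynomial.C a * T (n + k) by rw [T_add]; ring]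
      rw [← single_eq_C_mul_T, laurentBarInv_single]
      rw [polyBarInv_eq]
      rw [show (BIH (Polynomial.X ^ k) : LaurentPolynomial ℂ) = T (-(k:ℤ)) from BIH_X_pow k]
      rw [neg_add, T_add]; ring

lemma my_reflect_reflect {R : Type*} [Semiring R] (N : ℕ) (f : Polynomial R) :
    reflect N (reflect N f) = f := by
  ext i; rw [coeff_reflect, coeff_reflect, revAt_invol]

lemma my_natDegree_reflect_le {R : Type*} [Semiring R] {N : ℕ} {f : Polynomial R}
    (h : f.natDegree ≤ N) : (reflect N f).natDegree ≤ N := by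
  rw [natDegree_le_iff_coeff_eq_zero]
  intro i hi
  rw [coeff_reflect, revAt_eq_self_of_lt hi]
  exact coeff_eq_zero_of_natDegree_lt (lt_of_le_of_lt h hi)

lemma conj_comp : (starRingEnd ℂ).comp (starRingEnd ℂ) = RingHom.id ℂ := by
  ext z; simp

lemma reflect_X_mul {R : Type*} [Semiring R] {n : ℕ} {f : Polynomial R}
    (h : f.natDegree ≤ n) : reflect (n + 1) (Polynomial.X * f) = reflect n f := by
  have := reflect_mul (Polynomial.X) f (natDegree_X_le) h
  rw [add_comm 1 n] at this
  rw [this]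
  rw [show reflect 1 (Polynomial.X : Polynomial R) = 1 by
    rw [← pow_one (Polynomial.X : Polynomial R), reflect_monomial]
    norm_num [revAt_le]]
  rw [one_mul]

lemma reflect_succ_reflect {R : Type*} [Semiring R] {n : ℕ} {f : Polynomial R}
    (h : f.natDegree ≤ n) : reflect (n + 1) (reflect n f) = Polynomial.X * f := by
  rw [← reflect_X_mul h, my_reflect_reflect]

lemma natDegree_szego_le (α : ℕ → ℂ) (n : ℕ) : (szego α n).natDegree ≤ n := by
  induction n with
  | zero => simp [szego]
  | succ n ih =>
      rw [szego_succ]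
      refine le_trans (natDegree_sub_le _ _) (max_le ?_ ?_)
      · exact le_trans (natDegree_mul_le) (by simp only [natDegree_X]; omega)
      · refine le_trans (natDegree_mul_le) ?_
        have h1 : ((szego α n).map (starRingEnd ℂ)).natDegree ≤ n :=
          le_trans (natDegree_map_le) ih
        have h2 := my_natDegree_reflect_le h1
        rw [phs]
        simp only [natDegree_C, zero_add]
        omega

lemma natDegree_phs_le (α : ℕ → ℂ) (n : ℕ) : (phs α n).natDegree ≤ n :=
  my_natDegree_reflect_le (le_trans (natDegree_map_le) (natDegree_szego_le α n))

lemma coeff_szego_self (α : ℕ → ℂ) (n : ℕ) : (szego α n).coeff n = 1 := by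
  induction n with
  | zero => simp [szego]
  | succ n ih =>
      rw [szego_succ, coeff_sub, coeff_X_mul, ih, coeff_C_mul,
        coeff_eq_zero_of_natDegree_lt (lt_of_le_of_lt (natDegree_phs_le α n) (Nat.lt_succ_self n))]
      ring

lemma map_conj_phs (α : ℕ → ℂ) (n : ℕ) :
    (phs α n).map (starRingEnd ℂ) = reflect n (szego α n) := by
  rw [phs, ← reflect_map, Polynomial.map_map, conj_comp, Polynomial.map_id]

lemma phs_succ (α : ℕ → ℂ) (n : ℕ) :
    phs α (n + 1) = phs α n - Polynomial.C (α n) * (Polynomial.X * szego α n) := by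
  rw [phs, szego_succ, Polynomial.map_sub, Polynomial.map_mul, Polynomial.map_mul,
    Polynomial.map_X, map_C]
  have hd : ((szego α n).map (starRingEnd ℂ)).natDegree ≤ n :=
    le_trans (natDegree_map_le) (natDegree_szego_le α n)
  rw [show reflect (n+1) (Polynomial.X * (szego α n).map (starRingEnd ℂ)
        - Polynomial.C ((starRingEnd ℂ) ((starRingEnd ℂ) (α n))) * (phs α n).map (starRingEnd ℂ))
      = reflect (n+1) (Polynomial.X * (szego α n).map (starRingEnd ℂ))
        - reflect (n+1) (Polynomial.C ((starRingEnd ℂ) ((starRingEnd ℂ) (α n)))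
            * (phs α n).map (starRingEnd ℂ)) from ?_]
  · rw [reflect_X_mul hd, reflect_C_mul, map_conj_phs,
      reflect_succ_reflect (natDegree_szego_le α n), Complex.conj_conj, ← phs]
  · ext i
    simp [coeff_reflect]

/-- coefficients of the expansion of `Φ_r^*` in the `Φ_j`. -/
def gcoef (α : ℕ → ℂ) (j r : ℕ) : ℂ :=
  (if j = 0 then 1 else -(α (j-1))) *
    ∏ i ∈ Finset.Ico j r, ((1 - Complex.normSq (α i) : ℝ) : ℂ)

lemma one_sub_normSq (a : ℂ) :
    ((1 - Complex.normSq a : ℝ) : ℂ) = 1 - a * (starRingEnd ℂ) a := by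
  push_cast
  rw [Complex.mul_conj]

lemma phs_expansion (α : ℕ → ℂ) (r : ℕ) :
    phs α r = ∑ j ∈ range (r+1), Polynomial.C (gcoef α j r) * szego α j := by
  induction r with
  | zero =>
      simp [phs, szego, gcoef, reflect_C]
  | succ r ih =>
      have hX : Polynomial.X * szego α r
          = szego α (r+1) + Polynomial.C ((starRingEnd ℂ) (α r)) * phs α r := by
        rw [szego_succ]; ring
      have key : phs α (r+1)
          = Polynomial.C ((1 - Complex.normSq (α r) : ℝ) : ℂ) * phs α r
            - Polynomial.C (α r) * szego α (r+1) := by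
        rw [phs_succ, hX, one_sub_normSq, Polynomial.C_sub, Polynomial.C_mul, Polynomial.C_1]
        ring
      rw [key, ih, Finset.mul_sum]
      conv_rhs => rw [Finset.sum_range_succ]
      rw [sub_eq_add_neg]
      congr 1
      · refine Finset.sum_congr rfl fun j hj => ?_
        rw [Finset.mem_range] at hj
        rw [← mul_assoc, ← Polynomial.C_mul]
        congr 2
        rw [gcoef, gcoef, Finset.prod_Ico_succ_top (by omega : j ≤ r)]
        ring
      · rw [gcoef, if_neg (by omega), Finset.Ico_self, Finset.prod_empty, mul_one,
          map_neg, neg_mul, Nat.add_sub_cancel]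

lemma reflect_sum {ι : Type*} (N : ℕ) (s : Finset ι) (g : ι → Polynomial ℂ) :
    reflect N (∑ i ∈ s, g i) = ∑ i ∈ s, reflect N (g i) := by
  ext j
  simp [coeff_reflect, Polynomial.finset_sum_coeff]

lemma barInv_reflect {f : Polynomial ℂ} {N : ℕ} (h : f.natDegree ≤ N) :
    polyBarInv (reflect N (f.map (starRingEnd ℂ)))
      = T (-(N:ℤ)) * Polynomial.toLaurent f := by
  rw [polyBarInv_eq]
  have hf := f.as_sum_range' (N+1) (by omega)
  conv_lhs => rw [hf]
  conv_rhs => rw [hf]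
  rw [← Polynomial.coe_mapRingHom, map_sum, Polynomial.coe_mapRingHom, reflect_sum,
    map_sum, map_sum, Finset.mul_sum]
  refine Finset.sum_congr rfl fun k hk => ?_
  rw [Finset.mem_range] at hk
  have hkN : k ≤ N := by omega
  rw [map_monomial, ← C_mul_X_pow_eq_monomial, ← C_mul_X_pow_eq_monomial,
    reflect_C_mul_X_pow, revAt_le hkN, map_mul, map_mul, BIH_C, BIH_X_pow,
    Complex.conj_conj, Polynomial.toLaurent_C, Polynomial.toLaurent_X_pow]
  rw [show (-(((N - k : ℕ) : ℕ) : ℤ) : ℤ) = -(N:ℤ) + k by push_cast [hkN]; ring, T_add]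
  ring

lemma pbi_phs (α : ℕ → ℂ) (r : ℕ) :
    polyBarInv (phs α r) = T (-(r:ℤ)) * Polynomial.toLaurent (szego α r) := by
  rw [phs, barInv_reflect (natDegree_szego_le α r)]

lemma toLaurent_szego_eq (α : ℕ → ℂ) (s : ℕ) :
    Polynomial.toLaurent (szego α s) = T (s:ℤ) * polyBarInv (phs α s) := by
  rw [pbi_phs, ← mul_assoc, ← T_add]
  simp

/-! ### values of the linear functional -/

section Lsec
variable (L : LaurentPolynomial ℂ →ₗ[ℂ] ℂ) (α : ℕ → ℂ)

lemma L_C_mul (a : ℂ) (x : LaurentPolynomial ℂ) :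
    L (LaurentPolynomial.C a * x) = a * L x := by
  rw [LaurentPolynomial.C_eq_algebraMap, ← Algebra.smul_def, map_smul, smul_eq_mul]

/-- the norm `⟨Φ_s, Φ_s⟩`. -/
def kap (s : ℕ) : ℂ := ∏ j ∈ Finset.range s, ((1 - Complex.normSq (α j) : ℝ) : ℂ)

def Ap (r : ℕ) (j : ℤ) : ℂ := L (T j * polyBarInv (szego α r))

def Bp (r : ℕ) (j : ℤ) : ℂ := L (T j * polyBarInv (phs α r))

def cc (n r s : ℕ) : ℂ :=
  L (Polynomial.toLaurent (szego α s) * (T (-(n:ℤ)) * polyBarInv (szego α r)))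

lemma pbi_szego_succ (r : ℕ) :
    polyBarInv (szego α (r+1))
      = T (-1) * polyBarInv (szego α r)
        - LaurentPolynomial.C (α r) * polyBarInv (phs α r) := by
  rw [szego_succ, polyBarInv_eq, map_sub, map_mul, map_mul, BIH_X, BIH_C,
    Complex.conj_conj, ← polyBarInv_eq, ← polyBarInv_eq]

lemma pbi_phs_succ (r : ℕ) :
    polyBarInv (phs α (r+1))
      = polyBarInv (phs α r)
        - LaurentPolynomial.C ((starRingEnd ℂ) (α r)) * (T (-1) * polyBarInv (szego α r)) := by
  rw [phs_succ, polyBarInv_eq, map_sub, map_mul, map_mul, BIH_X, BIH_C,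
    ← polyBarInv_eq, ← polyBarInv_eq]

lemma RecA (r : ℕ) (j : ℤ) :
    Ap L α (r+1) j = Ap L α r (j-1) - α r * Bp L α r j := by
  rw [Ap, pbi_szego_succ, mul_sub, map_sub]
  congr 1
  · rw [Ap, ← mul_assoc, ← T_add, show j + -1 = j - 1 from by ring]
  · rw [show (T j : LaurentPolynomial ℂ) * (LaurentPolynomial.C (α r) * polyBarInv (phs α r))
        = LaurentPolynomial.C (α r) * (T j * polyBarInv (phs α r)) by ring, L_C_mul, Bp]

lemma RecB (r : ℕ) (j : ℤ) :
    Bp L α (r+1) j = Bp L α r j - (starRingEnd ℂ) (α r) * Ap L α r (j-1) := by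
  rw [Bp, pbi_phs_succ, mul_sub, map_sub, Bp]
  congr 1
  rw [show (T j : LaurentPolynomial ℂ) * (LaurentPolynomial.C ((starRingEnd ℂ) (α r)) *
        (T (-1) * polyBarInv (szego α r)))
      = LaurentPolynomial.C ((starRingEnd ℂ) (α r)) * (T (j - 1) * polyBarInv (szego α r)) by
    rw [T_sub]; ring, L_C_mul, Ap]

variable (hL1 : L 1 = 1)
  (hLphi : ∀ k : ℕ, 1 ≤ k → L (Polynomial.toLaurent (szego α k)) = 0)
  (hLbar : ∀ k : ℕ, 1 ≤ k → L (polyBarInv (szego α k)) = 0)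

include hLbar in
lemma Ap_zero (r : ℕ) (hr : 1 ≤ r) : Ap L α r 0 = 0 := by
  rw [Ap, T_zero, one_mul]
  exact hLbar r hr

include hLphi in
lemma Bp_top (r : ℕ) (hr : 1 ≤ r) : Bp L α r (r:ℤ) = 0 := by
  rw [Bp, pbi_phs, ← mul_assoc, ← T_add, add_neg_cancel, T_zero, one_mul]
  exact hLphi r hr

include hL1 hLphi hLbar in
lemma orth : ∀ r : ℕ,
    (∀ j : ℕ, j < r → Ap L α r j = 0) ∧ Ap L α r r = kap α r ∧
    (∀ j : ℕ, 1 ≤ j → j ≤ r → Bp L α r j = 0) ∧ Bp L α r 0 = kap α r := by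
  intro r
  induction r with
  | zero =>
      refine ⟨fun j hj => by omega, ?_, fun j hj hj' => by omega, ?_⟩
      · simp [Ap, szego_zero, polyBarInv_one, hL1, kap]
      · have h1 : phs α 0 = 1 := by
          simp [phs, szego_zero, reflect_C]
        simp [Bp, h1, polyBarInv_one, hL1, kap]
  | succ r ih =>
      obtain ⟨ih1, ih2, ih3, ih4⟩ := ih
      have hBtop : Bp L α r ((r:ℤ)+1) = (starRingEnd ℂ) (α r) * kap α r := by
        have h0 := Bp_top L α hLphi (r+1) (by omega)
        rw [show ((r+1 : ℕ) : ℤ) = (r:ℤ)+1 by push_cast; ring] at h0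
        rw [RecB] at h0
        rw [show ((r:ℤ)+1-1 : ℤ) = (r:ℤ) by ring, ih2] at h0
        linear_combination h0
      have hAneg : Ap L α r (-1) = α r * kap α r := by
        have h0 := Ap_zero L α hLbar (r+1) (by omega)
        rw [RecA] at h0
        rw [show ((0:ℤ)-1 : ℤ) = -1 by ring, ih4] at h0
        linear_combination h0
      have hkap : kap α (r+1) = kap α r * (1 - α r * (starRingEnd ℂ) (α r)) := by
        rw [kap, kap, Finset.prod_range_succ, one_sub_normSq]
      refine ⟨?_, ?_, ?_, ?_⟩
      · intro j hj
        rcases Nat.eq_zero_or_pos j with h | h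
        · subst h
          exact_mod_cast Ap_zero L α hLbar (r+1) (by omega)
        · obtain ⟨k, rfl⟩ := Nat.exists_eq_add_of_le h
          have hb := ih3 (1+k) (by omega) (by omega)
          rw [show ((1 + k : ℕ) : ℤ) = ((k:ℤ)+1) by push_cast; ring] at hb ⊢
          rw [RecA, show ((k:ℤ)+1-1 : ℤ) = (k:ℤ) by ring, ih1 k (by omega), hb]
          ring
      · rw [show ((r+1 : ℕ) : ℤ) = (r:ℤ)+1 by push_cast; ring, RecA,
          show ((r:ℤ)+1-1 : ℤ) = (r:ℤ) by ring, ih2, hBtop, hkap]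
        ring
      · intro j hj hj'
        rcases Nat.lt_or_ge j (r+1) with h | h
        · obtain ⟨k, rfl⟩ := Nat.exists_eq_add_of_le hj
          have hb := ih3 (1+k) (by omega) (by omega)
          rw [show ((1 + k : ℕ) : ℤ) = ((k:ℤ)+1) by push_cast; ring] at hb ⊢
          rw [RecB, show ((k:ℤ)+1-1 : ℤ) = (k:ℤ) by ring, hb]
          rcases Nat.eq_zero_or_pos k with h0 | h0
          · subst h0
            rw [show (((0:ℕ)):ℤ) = (0:ℤ) by norm_num,
              Ap_zero L α hLbar r (by omega)]
            ring
          · rw [ih1 k (by omega)]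
            ring
        · have : j = r+1 := by omega
          subst this
          exact_mod_cast Bp_top L α hLphi (r+1) (by omega)
      · rw [RecB, show ((0:ℤ)-1 : ℤ) = -1 by ring, ih4, hAneg, hkap]
        ring

end Lsec

section Main
variable (L : LaurentPolynomial ℂ →ₗ[ℂ] ℂ) (α : ℕ → ℂ)

lemma pbi_sum_range (f : Polynomial ℂ) (m : ℕ) (hm : f.natDegree < m) :
    polyBarInv f = ∑ k ∈ range m,
      LaurentPolynomial.C ((starRingEnd ℂ) (f.coeff k)) * T (-(k:ℤ)) := by
  rw [polyBarInv]
  exact f.sum_over_range' (by intro n; simp) m hm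

lemma toLaurent_sum_range (f : Polynomial ℂ) (m : ℕ) (hm : f.natDegree < m) :
    Polynomial.toLaurent f = ∑ k ∈ range m,
      LaurentPolynomial.C (f.coeff k) * T (k:ℤ) := by
  conv_lhs => rw [f.as_sum_range' m hm]
  rw [map_sum]
  refine Finset.sum_congr rfl fun k _ => ?_
  rw [← C_mul_X_pow_eq_monomial, Polynomial.toLaurent_C_mul_X_pow]

lemma cc_as_Bp (r s : ℕ) : cc L α 0 r s
    = ∑ k ∈ range (r+1), (starRingEnd ℂ) ((szego α r).coeff k) * Bp L α s ((s:ℤ) - k) := by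
  rw [cc, Nat.cast_zero, neg_zero, T_zero, one_mul, toLaurent_szego_eq,
    pbi_sum_range (szego α r) (r+1) (by exact Nat.lt_succ_of_le (natDegree_szego_le α r)),
    Finset.mul_sum, map_sum]
  refine Finset.sum_congr rfl fun k _ => ?_
  rw [show (T (s:ℤ) : LaurentPolynomial ℂ) * polyBarInv (phs α s) *
        (LaurentPolynomial.C ((starRingEnd ℂ) ((szego α r).coeff k)) * T (-(k:ℤ)))
      = LaurentPolynomial.C ((starRingEnd ℂ) ((szego α r).coeff k)) *
        (T ((s:ℤ) - k) * polyBarInv (phs α s)) by rw [T_sub]; ring, L_C_mul, Bp]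

lemma cc_as_Ap (r s : ℕ) : cc L α 0 r s
    = ∑ k ∈ range (s+1), (szego α s).coeff k * Ap L α r (k:ℤ) := by
  rw [cc, Nat.cast_zero, neg_zero, T_zero, one_mul,
    toLaurent_sum_range (szego α s) (s+1) (by exact Nat.lt_succ_of_le (natDegree_szego_le α s)),
    Finset.sum_mul, map_sum]
  refine Finset.sum_congr rfl fun k _ => ?_
  rw [show (LaurentPolynomial.C ((szego α s).coeff k) * T (k:ℤ)) * polyBarInv (szego α r)
      = LaurentPolynomial.C ((szego α s).coeff k) * (T (k:ℤ) * polyBarInv (szego α r)) by ring,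
    L_C_mul, Ap]

variable (hL1 : L 1 = 1)
  (hLphi : ∀ k : ℕ, 1 ≤ k → L (Polynomial.toLaurent (szego α k)) = 0)
  (hLbar : ∀ k : ℕ, 1 ≤ k → L (polyBarInv (szego α k)) = 0)

include hL1 hLphi hLbar in
lemma cc_zero (r s : ℕ) : cc L α 0 r s = if r = s then kap α s else 0 := by
  have o1 := fun m => (orth L α hL1 hLphi hLbar m).1
  have o3 := fun m => (orth L α hL1 hLphi hLbar m).2.2.1
  have o4 := fun m => (orth L α hL1 hLphi hLbar m).2.2.2
  rcases lt_trichotomy r s with h | h | h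
  · rw [if_neg (by omega), cc_as_Bp]
    refine Finset.sum_eq_zero fun k hk => ?_
    rw [Finset.mem_range] at hk
    have hk' : k ≤ r := by omega
    have := o3 s (s - k) (by omega) (by omega)
    rw [show (((s - k : ℕ)):ℤ) = (s:ℤ) - k by push_cast [(by omega : k ≤ s)]; ring] at this
    rw [this, mul_zero]
  · subst h
    rw [if_pos rfl, cc_as_Bp, Finset.sum_range_succ, coeff_szego_self]
    rw [show ((r:ℤ) - r : ℤ) = 0 by ring, o4 r]
    have hz : ∀ k ∈ range r, (starRingEnd ℂ) ((szego α r).coeff k) * Bp L α r ((r:ℤ) - k) = 0 := by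
      intro k hk
      rw [Finset.mem_range] at hk
      have := o3 r (r - k) (by omega) (by omega)
      rw [show (((r - k : ℕ)):ℤ) = (r:ℤ) - k by push_cast [(by omega : k ≤ r)]; ring] at this
      rw [this, mul_zero]
    rw [Finset.sum_eq_zero hz]
    simp
  · rw [if_neg (by omega), cc_as_Ap]
    refine Finset.sum_eq_zero fun k hk => ?_
    rw [Finset.mem_range] at hk
    rw [o1 r k (by omega), mul_zero]

lemma cc_succ (n r s : ℕ) : cc L α (n+1) r s
    = cc L α n (r+1) s
      + α r * ∑ j ∈ range (r+1), (starRingEnd ℂ) (gcoef α j r) * cc L α n j s := by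
  have e3 : polyBarInv (phs α r)
      = ∑ j ∈ range (r+1),
          LaurentPolynomial.C ((starRingEnd ℂ) (gcoef α j r)) * polyBarInv (szego α j) := by
    conv_lhs => rw [phs_expansion]
    rw [polyBarInv_eq, map_sum]
    refine Finset.sum_congr rfl fun j _ => ?_
    rw [map_mul, BIH_C, ← polyBarInv_eq]
  have e1 : (T (-((n+1:ℕ):ℤ)) : LaurentPolynomial ℂ) * polyBarInv (szego α r)
      = T (-(n:ℤ)) * (T (-1) * polyBarInv (szego α r)) := by
    rw [← mul_assoc, ← T_add]
    congr 2
    push_cast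
    ring
  have e2 : (T (-1) : LaurentPolynomial ℂ) * polyBarInv (szego α r)
      = polyBarInv (szego α (r+1)) + LaurentPolynomial.C (α r) * polyBarInv (phs α r) := by
    rw [pbi_szego_succ]
    ring
  rw [cc, e1, e2, mul_add, mul_add, map_add]
  congr 1
  · rw [e3, Finset.mul_sum]
    conv_lhs => rw [Finset.mul_sum, Finset.mul_sum, map_sum]
    rw [Finset.mul_sum]
    refine Finset.sum_congr rfl fun j _ => ?_
    rw [show Polynomial.toLaurent (szego α s) * (T (-(n:ℤ)) *
          (LaurentPolynomial.C (α r) *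
            (LaurentPolynomial.C ((starRingEnd ℂ) (gcoef α j r)) * polyBarInv (szego α j))))
        = LaurentPolynomial.C (α r) * (LaurentPolynomial.C ((starRingEnd ℂ) (gcoef α j r)) *
            (Polynomial.toLaurent (szego α s) * (T (-(n:ℤ)) * polyBarInv (szego α j)))) by ring,
      L_C_mul, L_C_mul]
    rfl

/-- normalized moments. -/
def mm (n r s : ℕ) : ℂ := cc L α n r s / kap α s

variable (hα : ∀ k, ‖α k‖ < 1)

include hα in
lemma kap_ne (s : ℕ) : kap α s ≠ 0 := by
  rw [kap]
  refine Finset.prod_ne_zero_iff.mpr fun j _ => ?_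
  have h1 := hα j
  have h2 : Complex.normSq (α j) < 1 := by
    have := Complex.sq_norm (α j)
    nlinarith [norm_nonneg (α j)]
  simp only [ne_eq, Complex.ofReal_eq_zero]
  intro h
  rw [sub_eq_zero] at h
  exact absurd h.symm (ne_of_lt h2)

include hL1 hLphi hLbar hα in
lemma mm_zero (r s : ℕ) : mm L α 0 r s = if r = s then 1 else 0 := by
  rw [mm, cc_zero L α hL1 hLphi hLbar]
  split
  · exact div_self (kap_ne α hα s)
  · exact zero_div _

lemma mm_succ (n r s : ℕ) : mm L α (n+1) r s
    = mm L α n (r+1) s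
      + α r * ∑ j ∈ range (r+1), (starRingEnd ℂ) (gcoef α j r) * mm L α n j s := by
  rw [mm, cc_succ, add_div, mm, mul_div_assoc, Finset.sum_div]
  congr 2
  refine Finset.sum_congr rfl fun j _ => ?_
  rw [mul_div_assoc, mm]

end Main

/-! ### polynomiality -/

def GoodN (α : ℕ → ℂ) (N : ℕ) (x : ℂ) : Prop :=
  ∃ P : MvPolynomial (Fin N ⊕ Fin N) ℕ,
    x = MvPolynomial.eval₂ (Nat.castRingHom ℂ)
      (Sum.elim (fun i : Fin N => α (i : ℕ))
        (fun i : Fin N => -(starRingEnd ℂ) (α (i : ℕ)))) P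

section GoodSec
variable {α : ℕ → ℂ} {N : ℕ}

lemma goodN_zero : GoodN α N 0 := ⟨0, by simp⟩

lemma goodN_one : GoodN α N 1 := ⟨1, by simp⟩

lemma goodN_add {x y : ℂ} (hx : GoodN α N x) (hy : GoodN α N y) : GoodN α N (x + y) := by
  obtain ⟨P, hP⟩ := hx; obtain ⟨Q, hQ⟩ := hy
  exact ⟨P + Q, by rw [MvPolynomial.eval₂_add, hP, hQ]⟩

lemma goodN_mul {x y : ℂ} (hx : GoodN α N x) (hy : GoodN α N y) : GoodN α N (x * y) := by
  obtain ⟨P, hP⟩ := hx; obtain ⟨Q, hQ⟩ := hy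
  exact ⟨P * Q, by rw [MvPolynomial.eval₂_mul, hP, hQ]⟩

lemma goodN_sum {ι : Type*} (s : Finset ι) (f : ι → ℂ) (h : ∀ i ∈ s, GoodN α N (f i)) :
    GoodN α N (∑ i ∈ s, f i) :=
  Finset.sum_induction f (GoodN α N) (fun _ _ => goodN_add) goodN_zero h

lemma goodN_prod {ι : Type*} (s : Finset ι) (f : ι → ℂ) (h : ∀ i ∈ s, GoodN α N (f i)) :
    GoodN α N (∏ i ∈ s, f i) :=
  Finset.prod_induction f (GoodN α N) (fun _ _ => goodN_mul) goodN_one h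

lemma goodN_alpha {j : ℕ} (h : j < N) : GoodN α N (α j) :=
  ⟨MvPolynomial.X (Sum.inl ⟨j, h⟩), by rw [MvPolynomial.eval₂_X]; simp⟩

lemma goodN_negconj {j : ℕ} (h : j < N) : GoodN α N (-(starRingEnd ℂ) (α j)) :=
  ⟨MvPolynomial.X (Sum.inr ⟨j, h⟩), by rw [MvPolynomial.eval₂_X]; simp⟩

lemma goodN_mono {M : ℕ} (h : N ≤ M) {x : ℂ} (hx : GoodN α N x) : GoodN α M x := by
  obtain ⟨P, hP⟩ := hx
  refine ⟨MvPolynomial.rename (Sum.map (Fin.castLE h) (Fin.castLE h)) P, ?_⟩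
  rw [MvPolynomial.eval₂_rename, hP]
  congr 1
  funext i
  rcases i with i | i <;> simp [Fin.castLE]

lemma goodN_onesub {j : ℕ} (h : j < N) :
    GoodN α N (((1 - Complex.normSq (α j) : ℝ) : ℂ)) := by
  rw [one_sub_normSq, show (1 : ℂ) - α j * (starRingEnd ℂ) (α j)
      = 1 + α j * (-(starRingEnd ℂ) (α j)) by ring]
  exact goodN_add goodN_one (goodN_mul (goodN_alpha h) (goodN_negconj h))

lemma goodN_conj_gcoef {j r : ℕ} (hj : j ≤ r) (hr : r ≤ N) :
    GoodN α N ((starRingEnd ℂ) (gcoef α j r)) := by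
  rw [gcoef, map_mul, map_prod]
  refine goodN_mul ?_ (goodN_prod _ _ fun i hi => ?_)
  · rcases Nat.eq_zero_or_pos j with h | h
    · subst h; simpa using goodN_one
    · rw [if_neg (by omega), map_neg]
      exact goodN_negconj (by omega)
  · rw [Finset.mem_Ico] at hi
    rw [Complex.conj_ofReal]
    exact goodN_onesub (by omega)

end GoodSec

lemma good_mm (L : LaurentPolynomial ℂ →ₗ[ℂ] ℂ) (α : ℕ → ℂ)
    (hα : ∀ k, ‖α k‖ < 1) (hL1 : L 1 = 1)
    (hLphi : ∀ k : ℕ, 1 ≤ k → L (Polynomial.toLaurent (szego α k)) = 0)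
    (hLbar : ∀ k : ℕ, 1 ≤ k → L (polyBarInv (szego α k)) = 0) :
    ∀ n r s : ℕ, GoodN α (n + r) (mm L α n r s) := by
  intro n
  induction n with
  | zero =>
      intro r s
      rw [mm_zero L α hL1 hLphi hLbar hα]
      split
      · exact goodN_one
      · exact goodN_zero
  | succ n ih =>
      intro r s
      rw [mm_succ]
      refine goodN_add ?_ (goodN_mul (goodN_alpha (by omega)) (goodN_sum _ _ fun j hj => ?_))
      · have := ih (r+1) s
        refine goodN_mono (by omega) this
      · rw [Finset.mem_range] at hj
        refine goodN_mul (goodN_conj_gcoef (by omega) (by omega)) ?_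
        exact goodN_mono (by omega) (ih j s)


/-- a generalized version of Verblunsky's formula: `μ_{n,r,s}` is a
polynomial with nonnegative integer coefficients in the `2(n+r)` quantities
`α_0, …, α_{n+r-1}, -conj(α_0), …, -conj(α_{n+r-1})`. -/
theorem genMom_polynomiality (α : ℕ → ℂ) (hα : ∀ k, ‖α k‖ < 1)
    (L : LaurentPolynomial ℂ →ₗ[ℂ] ℂ) (hL1 : L 1 = 1)
    (hLphi : ∀ k : ℕ, 1 ≤ k → L (Polynomial.toLaurent (szego α k)) = 0)
    (hLbar : ∀ k : ℕ, 1 ≤ k → L (polyBarInv (szego α k)) = 0)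
    (n r s : ℕ) :
    ∃ P : MvPolynomial (Fin (n + r) ⊕ Fin (n + r)) ℕ,
      genMom L α n r s =
        MvPolynomial.eval₂ (Nat.castRingHom ℂ)
          (Sum.elim (fun i : Fin (n + r) => α (i : ℕ))
            (fun i : Fin (n + r) => -(starRingEnd ℂ) (α (i : ℕ)))) P := by
  have hmm := good_mm L α hα hL1 hLphi hLbar n r s
  obtain ⟨P, hP⟩ := hmm
  refine ⟨P, ?_⟩
  rw [← hP]
  rw [genMom, laurentBarInv_T_mul_toLaurent, mm, cc, kap]

end
end

section
/- (Geronimus polynomials.) Let α ∈ ℂ with 0 < |α| < 1, and set α_n = α for all n ≥ 0. Let f, g ∈ ℂ[[z]] be the unique formal power series satisfying the functional equations f = 1 - z·f + (1-|α|²)·z·f² and g = 1 + (α/|α|²)·z·g - (α/|α|²)·(1-|α|²)·z·f·g. Then for every nonnegative integer m, the generating function of the generalized moments satisfies Σ_{n≥0} μ_{n,m} z^n = g·(z·f)^m as formal power series in ℂ[[z]]. (Here f and g are the formal power series expansions of 2/(1+z+√(1-2z+4|α|²z+z²)) and 2|α|²/(2|α|²+α-αz-α√(1-2z+4|α|²z+z²)),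 respectively.) -/
open Polynomial LaurentPolynomial Finset

noncomputable section

namespace Ger

lemma bar_single (k : ℤ) (c : ℂ) :
    laurentBarInv (AddMonoidAlgebra.single k c : LaurentPolynomial ℂ) =
      LaurentPolynomial.C ((starRingEnd ℂ) c) * LaurentPolynomial.T (-k) := by
  unfold laurentBarInv
  rw [AddMonoidAlgebra.coeff_single, Finsupp.sum_single_index]
  simp

lemma bar_add (x y : LaurentPolynomial ℂ) :
    laurentBarInv (x + y) = laurentBarInv x + laurentBarInv y := by
  unfold laurentBarInv
  rw [AddMonoidAlgebra.coeff_add]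
  refine Finsupp.sum_add_index' (fun k => by simp) (fun k b₁ b₂ => by rw [map_add, map_add, add_mul])

/-- `laurentBarInv` as an additive monoid hom. -/
def barHom : LaurentPolynomial ℂ →+ LaurentPolynomial ℂ :=
  AddMonoidHom.mk' laurentBarInv bar_add

lemma barHom_apply (x : LaurentPolynomial ℂ) : barHom x = laurentBarInv x := rfl

lemma bar_zero : laurentBarInv (0 : LaurentPolynomial ℂ) = 0 := map_zero barHom

lemma bar_sub (x y : LaurentPolynomial ℂ) :
    laurentBarInv (x - y) = laurentBarInv x - laurentBarInv y := map_sub barHom x y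

lemma bar_T (n : ℤ) : laurentBarInv (LaurentPolynomial.T n) = LaurentPolynomial.T (-n) := by
  have : (LaurentPolynomial.T n : LaurentPolynomial ℂ) = AddMonoidAlgebra.single n 1 := rfl
  rw [this, bar_single]
  simp

lemma bar_one : laurentBarInv (1 : LaurentPolynomial ℂ) = 1 := by
  have h := bar_T (0 : ℤ)
  simpa using h

lemma bar_T_mul (n : ℤ) (x : LaurentPolynomial ℂ) :
    laurentBarInv (LaurentPolynomial.T n * x) =
      LaurentPolynomial.T (-n) * laurentBarInv x := by
  induction x using AddMonoidAlgebra.induction with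
  | zero => simp [bar_zero]
  | single_add k c x _ _ ih =>
      rw [mul_add, bar_add, bar_add, ih, mul_add]
      congr 1
      have h1 : LaurentPolynomial.T n *
          (AddMonoidAlgebra.single k c : LaurentPolynomial ℂ) =
          (AddMonoidAlgebra.single (n + k) c : LaurentPolynomial ℂ) := by
        have h2 : (LaurentPolynomial.T n : LaurentPolynomial ℂ) =
            AddMonoidAlgebra.single n 1 := rfl
        rw [h2, AddMonoidAlgebra.single_mul_single, one_mul]
      rw [h1, bar_single, bar_single, neg_add, T_add]
      ring

lemma bar_C_mul (c : ℂ) (x : LaurentPolynomial ℂ) :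
    laurentBarInv (LaurentPolynomial.C c * x) =
      LaurentPolynomial.C ((starRingEnd ℂ) c) * laurentBarInv x := by
  induction x using AddMonoidAlgebra.induction with
  | zero => simp [bar_zero]
  | single_add k b x _ _ ih =>
      rw [mul_add, bar_add, bar_add, ih, mul_add]
      congr 1
      have h1 : LaurentPolynomial.C c *
          (AddMonoidAlgebra.single k b : LaurentPolynomial ℂ) =
          (AddMonoidAlgebra.single k (c * b) : LaurentPolynomial ℂ) := by
        have h2 : (LaurentPolynomial.C c : LaurentPolynomial ℂ) =
            AddMonoidAlgebra.single 0 c := rfl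
        rw [h2, AddMonoidAlgebra.single_mul_single, zero_add]
      rw [h1, bar_single, bar_single, map_mul, map_mul, mul_assoc]


lemma bar_C_mul_T (c : ℂ) (k : ℤ) :
    laurentBarInv (LaurentPolynomial.C c * LaurentPolynomial.T k) =
      LaurentPolynomial.C ((starRingEnd ℂ) c) * LaurentPolynomial.T (-k) := by
  rw [← single_eq_C_mul_T, bar_single]

lemma polyBarInv_eq (p : Polynomial ℂ) : polyBarInv p = laurentBarInv (Polynomial.toLaurent p) := by
  induction p using Polynomial.induction_on' with
  | add p q hp hq =>
      rw [map_add, bar_add, ← hp, ← hq]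
      unfold polyBarInv
      rw [Polynomial.sum_add_index]
      · intro i; simp
      · intro i b₁ b₂; rw [map_add, map_add, add_mul]
  | monomial n c =>
      unfold polyBarInv
      rw [Polynomial.sum_monomial_index _ _ (by simp)]
      rw [Polynomial.toLaurent_C_mul_T, bar_C_mul_T]

lemma natDegree_reflect_le {q : Polynomial ℂ} {k : ℕ} (h : q.natDegree ≤ k) :
    (Polynomial.reflect k q).natDegree ≤ k := by
  rw [Polynomial.natDegree_le_iff_coeff_eq_zero] at h ⊢
  intro N hN
  rw [Polynomial.coeff_reflect, Polynomial.revAt_eq_self_of_lt hN]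
  exact h N hN

lemma natDegree_szego_le (α : ℕ → ℂ) (k : ℕ) : (szego α k).natDegree ≤ k := by
  induction k with
  | zero => simp [szego]
  | succ k ih =>
      rw [szego]
      refine le_trans (Polynomial.natDegree_sub_le _ _) ?_
      simp only [sup_le_iff]
      constructor
      · refine le_trans (Polynomial.natDegree_mul_le) ?_
        have hX : (Polynomial.X : Polynomial ℂ).natDegree = 1 := Polynomial.natDegree_X
        omega
      · refine le_trans (Polynomial.natDegree_mul_le) ?_
        have h1 : (Polynomial.reflect k ((szego α k).map (starRingEnd ℂ))).natDegree ≤ k :=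
          natDegree_reflect_le (le_trans Polynomial.natDegree_map_le ih)
        have hC : (Polynomial.C ((starRingEnd ℂ) (α k))).natDegree = 0 := Polynomial.natDegree_C _
        omega

/-- `Φ_k^*` -/
def phiS (α : ℕ → ℂ) (k : ℕ) : Polynomial ℂ :=
  Polynomial.reflect k ((szego α k).map (starRingEnd ℂ))

lemma szego_succ (α : ℕ → ℂ) (k : ℕ) :
    szego α (k + 1) = Polynomial.X * szego α k -
      Polynomial.C ((starRingEnd ℂ) (α k)) * phiS α k := rfl

lemma reflect_reflect (P : Polynomial ℂ) (k : ℕ) (h : P.natDegree ≤ k) :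
    Polynomial.reflect (k + 1) (Polynomial.reflect k P) = Polynomial.X * P := by
  ext i
  rw [Polynomial.coeff_reflect, Polynomial.coeff_reflect]
  rcases i with _ | j
  · rw [Polynomial.revAt_le (Nat.zero_le _), Nat.sub_zero,
      Polynomial.revAt_eq_self_of_lt (Nat.lt_succ_self k)]
    have : P.coeff (k + 1) = 0 := Polynomial.coeff_eq_zero_of_natDegree_lt (by omega)
    simp [this]
  · rw [Polynomial.coeff_X_mul]
    by_cases hj : j + 1 ≤ k + 1
    · rw [Polynomial.revAt_le hj, Polynomial.revAt_le (by omega)]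
      congr 1
      omega
    · have e1 : Polynomial.revAt (k + 1) (j + 1) = j + 1 :=
        Polynomial.revAt_eq_self_of_lt (by omega)
      rw [e1, Polynomial.revAt_eq_self_of_lt (by omega)]
      rw [Polynomial.coeff_eq_zero_of_natDegree_lt (by omega),
        Polynomial.coeff_eq_zero_of_natDegree_lt (by omega)]

lemma phiS_succ (α : ℕ → ℂ) (k : ℕ) :
    phiS α (k + 1) = phiS α k - Polynomial.C (α k) * (Polynomial.X * szego α k) := by
  have hdeg : ((szego α k).map (starRingEnd ℂ)).natDegree ≤ k :=
    le_trans Polynomial.natDegree_map_le (natDegree_szego_le α k)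
  have hmapphiS : (phiS α k).map (starRingEnd ℂ) = Polynomial.reflect k (szego α k) := by
    unfold phiS
    rw [← Polynomial.reflect_map, Polynomial.map_map,
      show (starRingEnd ℂ).comp (starRingEnd ℂ) = RingHom.id ℂ from
        RingHom.ext fun x => Complex.conj_conj x, Polynomial.map_id]
  unfold phiS
  rw [szego_succ]
  rw [Polynomial.map_sub, Polynomial.map_mul, Polynomial.map_mul, Polynomial.map_X,
    Polynomial.map_C, Complex.conj_conj]
  rw [Polynomial.reflect_sub, Polynomial.reflect_C_mul, hmapphiS]
  have h1 : Polynomial.reflect (k + 1) (Polynomial.X * (szego α k).map (starRingEnd ℂ)) =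
      Polynomial.reflect k ((szego α k).map (starRingEnd ℂ)) := by
    have := Polynomial.reflect_mul (f := (Polynomial.X : Polynomial ℂ))
      (g := (szego α k).map (starRingEnd ℂ)) (F := 1) (G := k)
      Polynomial.natDegree_X.le (le_trans Polynomial.natDegree_map_le (natDegree_szego_le α k))
    rw [add_comm] at this
    rw [this, Polynomial.reflect_one_X, one_mul]
  rw [h1, reflect_reflect _ _ (natDegree_szego_le α k)]


lemma reflect_finset_sum {ι : Type*} (s : Finset ι) (N : ℕ) (f : ι → Polynomial ℂ) :
    Polynomial.reflect N (∑ i ∈ s, f i) = ∑ i ∈ s, Polynomial.reflect N (f i) := by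
  induction s using Finset.cons_induction with
  | empty => simp [Polynomial.reflect_zero]
  | cons a s ha ih => rw [Finset.sum_cons, Finset.sum_cons, Polynomial.reflect_add, ih]

lemma bar_phiS (α : ℕ → ℂ) (k : ℕ) :
    laurentBarInv (Polynomial.toLaurent (phiS α k)) =
      LaurentPolynomial.T (-(k : ℤ)) * Polynomial.toLaurent (szego α k) := by
  set P := szego α k with hPdef
  have hd : P.natDegree < k + 1 := lt_of_le_of_lt (natDegree_szego_le α k) (Nat.lt_succ_self k)
  have hP := Polynomial.as_sum_range' P (k + 1) hd
  have e1 : phiS α k = ∑ i ∈ Finset.range (k + 1),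
      Polynomial.monomial (k - i) ((starRingEnd ℂ) (P.coeff i)) := by
    unfold phiS
    conv_lhs => rw [← hPdef, hP]
    rw [Polynomial.map_sum, reflect_finset_sum]
    refine Finset.sum_congr rfl fun i hi => ?_
    rw [Polynomial.map_monomial, ← Polynomial.C_mul_X_pow_eq_monomial,
      Polynomial.reflect_C_mul_X_pow,
      Polynomial.revAt_le (Nat.lt_succ_iff.mp (Finset.mem_range.mp hi)),
      Polynomial.C_mul_X_pow_eq_monomial]
  rw [e1, map_sum, ← barHom_apply, map_sum]
  conv_rhs => rw [hP]
  rw [map_sum, Finset.mul_sum]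
  refine Finset.sum_congr rfl fun i hi => ?_
  have hik : i ≤ k := Nat.lt_succ_iff.mp (Finset.mem_range.mp hi)
  rw [barHom_apply, Polynomial.toLaurent_C_mul_T, bar_C_mul_T, Complex.conj_conj,
    Polynomial.toLaurent_C_mul_T]
  rw [mul_left_comm, ← T_add]
  congr 2
  omega


lemma T_mul_T (a b : ℤ) : (LaurentPolynomial.T a : LaurentPolynomial ℂ) * LaurentPolynomial.T b
    = LaurentPolynomial.T (a + b) := (T_add a b).symm

lemma lid1 (α : ℕ → ℂ) (m : ℕ) (n : ℤ) :
    LaurentPolynomial.T n * Polynomial.toLaurent (szego α (m + 1)) =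
      LaurentPolynomial.T (n + 1) * Polynomial.toLaurent (szego α m) -
        LaurentPolynomial.C ((starRingEnd ℂ) (α m)) *
          (LaurentPolynomial.T n * Polynomial.toLaurent (phiS α m)) := by
  rw [szego_succ, map_sub, map_mul, map_mul, Polynomial.toLaurent_X, Polynomial.toLaurent_C]
  rw [mul_sub, ← mul_assoc, T_mul_T]
  ring

lemma lid2 (α : ℕ → ℂ) (m : ℕ) (n : ℤ) :
    LaurentPolynomial.T n * Polynomial.toLaurent (phiS α (m + 1)) =
      LaurentPolynomial.T n * Polynomial.toLaurent (phiS α m) -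
        LaurentPolynomial.C (α m) *
          (LaurentPolynomial.T (n + 1) * Polynomial.toLaurent (szego α m)) := by
  rw [phiS_succ, map_sub, map_mul, map_mul, Polynomial.toLaurent_X, Polynomial.toLaurent_C,
    mul_sub]
  congr 1
  rw [← T_mul_T]
  ring

lemma lid3 (α : ℕ → ℂ) (m : ℕ) (n : ℤ) :
    LaurentPolynomial.T n * laurentBarInv (Polynomial.toLaurent (szego α (m + 1))) =
      LaurentPolynomial.T (n - 1) * laurentBarInv (Polynomial.toLaurent (szego α m)) -
        LaurentPolynomial.C (α m) *
          (LaurentPolynomial.T (n - (m : ℤ)) * Polynomial.toLaurent (szego α m)) := by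
  have h := lid1 α m (0 : ℤ)
  rw [zero_add, T_zero, one_mul, one_mul] at h
  rw [h, bar_sub, bar_T_mul, bar_C_mul, bar_phiS, Complex.conj_conj, mul_sub]
  congr 1
  · rw [← mul_assoc, T_mul_T]
    ring_nf
  · rw [← mul_assoc, mul_comm (LaurentPolynomial.T n) (LaurentPolynomial.C (α m)), mul_assoc,
      ← mul_assoc (LaurentPolynomial.T n), T_mul_T]
    ring_nf

lemma lid4 (α : ℕ → ℂ) (m : ℕ) (n : ℤ) :
    LaurentPolynomial.T (n - ((m : ℤ) + 1)) * Polynomial.toLaurent (szego α (m + 1)) =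
      LaurentPolynomial.T (n - (m : ℤ)) * Polynomial.toLaurent (szego α m) -
        LaurentPolynomial.C ((starRingEnd ℂ) (α m)) *
          (LaurentPolynomial.T (n - 1) * laurentBarInv (Polynomial.toLaurent (szego α m))) := by
  have hb : laurentBarInv (Polynomial.toLaurent (phiS α (m + 1))) =
      laurentBarInv (Polynomial.toLaurent (phiS α m)) -
        LaurentPolynomial.C ((starRingEnd ℂ) (α m)) *
          (LaurentPolynomial.T (-1) * laurentBarInv (Polynomial.toLaurent (szego α m))) := by
    rw [phiS_succ, map_sub, map_mul, map_mul, Polynomial.toLaurent_X, Polynomial.toLaurent_C,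
      bar_sub, bar_C_mul, bar_T_mul]
  rw [bar_phiS, bar_phiS] at hb
  have h := congrArg (fun x => LaurentPolynomial.T n * x) hb
  simp only [mul_sub] at h
  rw [← mul_assoc, T_mul_T] at h
  rw [show n + -(((m + 1 : ℕ)) : ℤ) = n - ((m : ℤ) + 1) by push_cast; ring] at h
  rw [h]
  congr 1
  · rw [← mul_assoc, T_mul_T]
    ring_nf
  · rw [mul_left_comm, ← mul_assoc (LaurentPolynomial.T n), T_mul_T]
    ring_nf


lemma L_C_mul (L : LaurentPolynomial ℂ →ₗ[ℂ] ℂ) (c : ℂ) (x : LaurentPolynomial ℂ) :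
    L (LaurentPolynomial.C c * x) = c * L x := by
  rw [LaurentPolynomial.C_eq_algebraMap, ← Algebra.smul_def, map_smul, smul_eq_mul]

variable (L : LaurentPolynomial ℂ →ₗ[ℂ] ℂ) (α : ℕ → ℂ)

/-- `Σ_n L(z^{-n} Φ_m) zⁿ` -/
def AS (m : ℕ) : PowerSeries ℂ :=
  PowerSeries.mk fun n => L (LaurentPolynomial.T (-(n : ℤ)) * Polynomial.toLaurent (szego α m))

def BS (m : ℕ) : PowerSeries ℂ :=
  PowerSeries.mk fun n => L (LaurentPolynomial.T (-(n : ℤ)) * Polynomial.toLaurent (phiS α m))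

def CS (m : ℕ) : PowerSeries ℂ :=
  PowerSeries.mk fun n =>
    L (LaurentPolynomial.T (-(n : ℤ)) * laurentBarInv (Polynomial.toLaurent (szego α m)))

def DS (m : ℕ) : PowerSeries ℂ :=
  PowerSeries.mk fun n =>
    L (LaurentPolynomial.T (-(n : ℤ) - (m : ℤ)) * Polynomial.toLaurent (szego α m))

lemma cA1 (m n : ℕ) : PowerSeries.coeff (n + 1) (AS L α (m + 1)) =
    PowerSeries.coeff n (AS L α m) -
      (starRingEnd ℂ) (α m) * PowerSeries.coeff (n + 1) (BS L α m) := by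
  simp only [AS, BS, PowerSeries.coeff_mk]
  have h := lid1 α m (-((n + 1 : ℕ) : ℤ))
  rw [show (-((n + 1 : ℕ) : ℤ) + 1) = -(n : ℤ) by push_cast; ring] at h
  rw [h, map_sub, L_C_mul]

lemma cB1 (m n : ℕ) : PowerSeries.coeff (n + 1) (BS L α (m + 1)) =
    PowerSeries.coeff (n + 1) (BS L α m) -
      α m * PowerSeries.coeff n (AS L α m) := by
  simp only [AS, BS, PowerSeries.coeff_mk]
  have h := lid2 α m (-((n + 1 : ℕ) : ℤ))
  rw [show (-((n + 1 : ℕ) : ℤ) + 1) = -(n : ℤ) by push_cast; ring] at h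
  rw [h, map_sub, L_C_mul]

lemma cC1 (m n : ℕ) : PowerSeries.coeff n (CS L α (m + 1)) =
    PowerSeries.coeff (n + 1) (CS L α m) -
      α m * PowerSeries.coeff n (DS L α m) := by
  simp only [CS, DS, PowerSeries.coeff_mk]
  have h := lid3 α m (-(n : ℤ))
  rw [show (-(n : ℤ) - 1) = -((n + 1 : ℕ) : ℤ) by push_cast; ring] at h
  rw [h, map_sub, L_C_mul]

lemma cD1 (m n : ℕ) : PowerSeries.coeff n (DS L α (m + 1)) =
    PowerSeries.coeff n (DS L α m) -
      (starRingEnd ℂ) (α m) * PowerSeries.coeff (n + 1) (CS L α m) := by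
  simp only [CS, DS, PowerSeries.coeff_mk]
  have h := lid4 α m (-(n : ℤ))
  rw [show (-(n : ℤ) - ((m : ℤ) + 1)) = -(n : ℤ) - ((m + 1 : ℕ) : ℤ) by push_cast; ring,
    show (-(n : ℤ) - 1) = -((n + 1 : ℕ) : ℤ) by push_cast; ring] at h
  rw [h, map_sub, L_C_mul]

lemma cA0 (hLphi : ∀ k : ℕ, 1 ≤ k → L (Polynomial.toLaurent (szego α k)) = 0) (m : ℕ) :
    PowerSeries.coeff 0 (AS L α (m + 1)) = 0 := by
  simp only [AS, PowerSeries.coeff_mk, Nat.cast_zero, neg_zero, T_zero, one_mul]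
  exact hLphi (m + 1) (by omega)

lemma LT1 (hLphi : ∀ k : ℕ, 1 ≤ k → L (Polynomial.toLaurent (szego α k)) = 0) (m : ℕ) :
    L (LaurentPolynomial.T 1 * Polynomial.toLaurent (szego α m)) =
      (starRingEnd ℂ) (α m) * L (Polynomial.toLaurent (phiS α m)) := by
  have h := lid1 α m 0
  rw [zero_add, T_zero, one_mul, one_mul] at h
  have h2 := congrArg L h
  rw [map_sub, L_C_mul, hLphi (m + 1) (by omega)] at h2
  linear_combination -h2

lemma cB0 (hLphi : ∀ k : ℕ, 1 ≤ k → L (Polynomial.toLaurent (szego α k)) = 0) (m : ℕ) :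
    PowerSeries.coeff 0 (BS L α (m + 1)) =
      (1 - α m * (starRingEnd ℂ) (α m)) * PowerSeries.coeff 0 (BS L α m) := by
  simp only [BS, PowerSeries.coeff_mk, Nat.cast_zero, neg_zero, T_zero, one_mul]
  have h := lid2 α m 0
  rw [zero_add, T_zero, one_mul, one_mul] at h
  have h2 := congrArg L h
  rw [map_sub, L_C_mul, LT1 L α hLphi m] at h2
  rw [h2]
  ring

lemma cC0 (hLbar : ∀ k : ℕ, 1 ≤ k → L (polyBarInv (szego α k)) = 0) (m : ℕ) :
    PowerSeries.coeff 0 (CS L α (m + 1)) = 0 := by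
  simp only [CS, PowerSeries.coeff_mk, Nat.cast_zero, neg_zero, T_zero, one_mul]
  rw [← polyBarInv_eq]
  exact hLbar (m + 1) (by omega)

lemma szego_zero : szego α 0 = 1 := rfl

lemma phiS_zero : phiS α 0 = 1 := by
  unfold phiS
  rw [szego_zero, Polynomial.map_one]
  ext i
  rw [Polynomial.coeff_reflect]
  rcases i with _ | j
  · simp
  · rw [Polynomial.revAt_eq_self_of_lt (by omega)]

lemma cC00 (hL1 : L 1 = 1) : PowerSeries.coeff 0 (CS L α 0) = 1 := by
  simp only [CS, PowerSeries.coeff_mk, Nat.cast_zero, neg_zero, T_zero, one_mul]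
  rw [szego_zero, Polynomial.toLaurent_one, bar_one, hL1]

lemma AS0_eq_CS0 : AS L α 0 = CS L α 0 := by
  unfold AS CS
  rw [szego_zero, Polynomial.toLaurent_one, bar_one]

lemma BS0_eq_CS0 : BS L α 0 = CS L α 0 := by
  unfold BS CS
  rw [szego_zero, phiS_zero, Polynomial.toLaurent_one, bar_one]


section Alg

variable (a b ρ β : ℂ) (f g : PowerSeries ℂ)

/-- numerator series for `Ccand (k+1)` -/
def uC : PowerSeries ℂ :=
  (PowerSeries.C β * (1 - PowerSeries.C ρ * f) - PowerSeries.C a) * g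

def Ccand : ℕ → PowerSeries ℂ
  | 0 => g
  | k + 1 => uC a ρ β f g * (PowerSeries.C ρ * f) ^ k

def Dcand (k : ℕ) : PowerSeries ℂ := g * (PowerSeries.C ρ * f) ^ k

def Acand (m : ℕ) : PowerSeries ℂ :=
  (PowerSeries.C ρ) ^ m * (g * (PowerSeries.X * f) ^ m)

def Bcand (m : ℕ) : PowerSeries ℂ :=
  (PowerSeries.C ρ) ^ m *
    (1 + PowerSeries.C β * PowerSeries.X *
      ((1 - PowerSeries.C ρ * f) * g * (PowerSeries.X * f) ^ m))

lemma alg_I1 (hg : g = 1 + PowerSeries.C β * PowerSeries.X * g -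
    PowerSeries.C (β * ρ) * PowerSeries.X * f * g) :
    g = 1 + PowerSeries.C β * PowerSeries.X * ((1 - PowerSeries.C ρ * f) * g) := by
  have hg' := hg
  rw [map_mul] at hg'
  linear_combination hg'

lemma alg_I2 (hf : f = 1 - PowerSeries.X * f + PowerSeries.C ρ * PowerSeries.X * f ^ 2) :
    PowerSeries.C ρ * PowerSeries.X * f ^ 2 = f - 1 + PowerSeries.X * f := by
  linear_combination -hf

lemma alg_I3 (hf : f = 1 - PowerSeries.X * f + PowerSeries.C ρ * PowerSeries.X * f ^ 2) :
    (1 - PowerSeries.C ρ * f) * (1 - PowerSeries.C ρ * (PowerSeries.X * f)) =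
      1 - PowerSeries.C ρ := by
  linear_combination (PowerSeries.C ρ) * alg_I2 ρ f hf

lemma alg_e1 (hρ : ρ = 1 - a * b) (hba : β * b = 1) :
    PowerSeries.C β * (1 - PowerSeries.C ρ) = PowerSeries.C a := by
  have h : β * (1 - ρ) = a := by linear_combination -β * hρ + a * hba
  rw [← h, map_mul, map_sub, map_one]

lemma alg_e3 (hρ : ρ = 1 - a * b) :
    PowerSeries.C a * PowerSeries.C b = 1 - PowerSeries.C ρ := by
  rw [← map_mul, hρ, map_sub, map_one]
  ring

lemma alg_e2 (hba : β * b = 1) : PowerSeries.C β * PowerSeries.C b = 1 := by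
  rw [← map_mul, hba, map_one]

lemma candC0 (hg : g = 1 + PowerSeries.C β * PowerSeries.X * g -
    PowerSeries.C (β * ρ) * PowerSeries.X * f * g) :
    Ccand a ρ β f g 0 = 1 + PowerSeries.X * Ccand a ρ β f g 1 +
      PowerSeries.C a * PowerSeries.X * Dcand ρ f g 0 := by
  simp only [Ccand, Dcand, uC, pow_zero, mul_one]
  linear_combination alg_I1 ρ β f g hg

lemma candCk (hρ : ρ = 1 - a * b) (hba : β * b = 1)
    (hf : f = 1 - PowerSeries.X * f + PowerSeries.C ρ * PowerSeries.X * f ^ 2) (k : ℕ) :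
    Ccand a ρ β f g (k + 1) = PowerSeries.X * Ccand a ρ β f g (k + 2) +
      PowerSeries.C a * PowerSeries.X * Dcand ρ f g (k + 1) := by
  simp only [Ccand, Dcand, uC]
  linear_combination ((PowerSeries.C ρ * f) ^ k * g * PowerSeries.C β) * alg_I3 ρ f hf +
    ((PowerSeries.C ρ * f) ^ k * g) * alg_e1 a b ρ β hρ hba

lemma candD0 (hba : β * b = 1)
    (hg : g = 1 + PowerSeries.C β * PowerSeries.X * g -
      PowerSeries.C (β * ρ) * PowerSeries.X * f * g) :
    PowerSeries.X * Dcand ρ f g 1 = PowerSeries.X * Dcand ρ f g 0 -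
      PowerSeries.C b * (Ccand a ρ β f g 0 - 1) := by
  simp only [Ccand, Dcand, pow_zero, pow_one, mul_one]
  linear_combination (PowerSeries.C b) * alg_I1 ρ β f g hg +
    (PowerSeries.X * (1 - PowerSeries.C ρ * f) * g) * alg_e2 b β hba

lemma candDk (hρ : ρ = 1 - a * b) (hba : β * b = 1)
    (hf : f = 1 - PowerSeries.X * f + PowerSeries.C ρ * PowerSeries.X * f ^ 2) (k : ℕ) :
    PowerSeries.X * Dcand ρ f g (k + 2) =
      PowerSeries.X * Dcand ρ f g (k + 1) - PowerSeries.C b * Ccand a ρ β f g (k + 1) := by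
  simp only [Ccand, Dcand, uC]
  linear_combination ((PowerSeries.C ρ * f) ^ k) *
      ((PowerSeries.C ρ * g) * alg_I2 ρ f hf +
        ((1 - PowerSeries.C ρ * f) * g) * alg_e2 b β hba -
        g * alg_e3 a b ρ hρ)

lemma candArec (hba : β * b = 1) (m : ℕ) : Acand ρ f g (m + 1) =
    PowerSeries.X * Acand ρ f g m - PowerSeries.C b * Bcand ρ β f g m +
      PowerSeries.C b * (PowerSeries.C ρ) ^ m := by
  simp only [Acand, Bcand]
  linear_combination (PowerSeries.X * (PowerSeries.C ρ) ^ m * (1 - PowerSeries.C ρ * f) * g *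
      (PowerSeries.X * f) ^ m) * alg_e2 b β hba

lemma candBrec (hρ : ρ = 1 - a * b) (hba : β * b = 1)
    (hf : f = 1 - PowerSeries.X * f + PowerSeries.C ρ * PowerSeries.X * f ^ 2) (m : ℕ) :
    Bcand ρ β f g (m + 1) =
      Bcand ρ β f g m - PowerSeries.C a * (PowerSeries.X * Acand ρ f g m) -
        PowerSeries.C a * PowerSeries.C b * (PowerSeries.C ρ) ^ m := by
  simp only [Acand, Bcand]
  linear_combination ((PowerSeries.C ρ) ^ m) * alg_e3 a b ρ hρ -
    ((PowerSeries.C ρ) ^ m * PowerSeries.X * g * (PowerSeries.X * f) ^ m * PowerSeries.C β) *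
      alg_I3 ρ f hf -
    ((PowerSeries.C ρ) ^ m * PowerSeries.X * g * (PowerSeries.X * f) ^ m) *
      alg_e1 a b ρ β hρ hba

end Alg



section Coeffs

variable (a b ρ β : ℂ) (f g : PowerSeries ℂ)

lemma g_const1 (hg : g = 1 + PowerSeries.C β * PowerSeries.X * g -
    PowerSeries.C (β * ρ) * PowerSeries.X * f * g) :
    PowerSeries.constantCoeff g = 1 := by
  have h := congrArg (PowerSeries.constantCoeff) hg
  simpa using h

lemma f_const1 (hf : f = 1 - PowerSeries.X * f + PowerSeries.C ρ * PowerSeries.X * f ^ 2) :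
    PowerSeries.constantCoeff f = 1 := by
  have h := congrArg (PowerSeries.constantCoeff) hf
  simpa using h

lemma cc0_Ccand0 (hg : g = 1 + PowerSeries.C β * PowerSeries.X * g -
    PowerSeries.C (β * ρ) * PowerSeries.X * f * g) :
    PowerSeries.coeff 0 (Ccand a ρ β f g 0) = 1 := by
  rw [PowerSeries.coeff_zero_eq_constantCoeff]
  exact g_const1 ρ β f g hg

lemma cc0_Ccand_succ (hρ : ρ = 1 - a * b) (hba : β * b = 1)
    (hf : f = 1 - PowerSeries.X * f + PowerSeries.C ρ * PowerSeries.X * f ^ 2) (k : ℕ) :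
    PowerSeries.coeff 0 (Ccand a ρ β f g (k + 1)) = 0 := by
  rw [PowerSeries.coeff_zero_eq_constantCoeff]
  simp only [Ccand, uC, map_mul, map_pow, map_sub, map_one, PowerSeries.constantCoeff_C,
    f_const1 ρ f hf, mul_one]
  have h : β * (1 - ρ) - a = 0 := by linear_combination -β * hρ + a * hba
  rw [h]
  ring

lemma candR1 (hρ : ρ = 1 - a * b) (hba : β * b = 1)
    (hf : f = 1 - PowerSeries.X * f + PowerSeries.C ρ * PowerSeries.X * f ^ 2)
    (hg : g = 1 + PowerSeries.C β * PowerSeries.X * g -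
      PowerSeries.C (β * ρ) * PowerSeries.X * f * g) (n k : ℕ) :
    PowerSeries.coeff (n + 1) (Ccand a ρ β f g k) =
      PowerSeries.coeff n (Ccand a ρ β f g (k + 1)) +
        a * PowerSeries.coeff n (Dcand ρ f g k) := by
  rcases k with _ | k
  · have h := congrArg (PowerSeries.coeff (n + 1)) (candC0 a ρ β f g hg)
    rw [map_add, map_add, PowerSeries.coeff_succ_X_mul, mul_assoc, PowerSeries.coeff_C_mul,
      PowerSeries.coeff_succ_X_mul, PowerSeries.coeff_one] at h
    simpa using h
  · have h := congrArg (PowerSeries.coeff (n + 1)) (candCk a b ρ β f g hρ hba hf k)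
    rw [map_add, PowerSeries.coeff_succ_X_mul, mul_assoc, PowerSeries.coeff_C_mul,
      PowerSeries.coeff_succ_X_mul] at h
    exact h

lemma candR2 (hρ : ρ = 1 - a * b) (hba : β * b = 1)
    (hf : f = 1 - PowerSeries.X * f + PowerSeries.C ρ * PowerSeries.X * f ^ 2)
    (hg : g = 1 + PowerSeries.C β * PowerSeries.X * g -
      PowerSeries.C (β * ρ) * PowerSeries.X * f * g) (n k : ℕ) :
    PowerSeries.coeff n (Dcand ρ f g (k + 1)) =
      PowerSeries.coeff n (Dcand ρ f g k) -
        b * PowerSeries.coeff (n + 1) (Ccand a ρ β f g k) := by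
  rcases k with _ | k
  · have h := congrArg (PowerSeries.coeff (n + 1)) (candD0 a b ρ β f g hba hg)
    rw [PowerSeries.coeff_succ_X_mul, map_sub, PowerSeries.coeff_succ_X_mul,
      PowerSeries.coeff_C_mul, map_sub, PowerSeries.coeff_one] at h
    simpa using h
  · have h := congrArg (PowerSeries.coeff (n + 1)) (candDk a b ρ β f g hρ hba hf k)
    rw [PowerSeries.coeff_succ_X_mul, map_sub, PowerSeries.coeff_succ_X_mul,
      PowerSeries.coeff_C_mul] at h
    exact h

end Coeffs

section Main

variable (L : LaurentPolynomial ℂ →ₗ[ℂ] ℂ) (a ρ β : ℂ) (f g : PowerSeries ℂ)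

lemma main_CD (hL1 : L 1 = 1)
    (hLbar : ∀ k : ℕ, 1 ≤ k → L (polyBarInv (szego (fun _ => a) k)) = 0)
    (hρ : ρ = 1 - a * (starRingEnd ℂ) a) (hba : β * (starRingEnd ℂ) a = 1)
    (hf : f = 1 - PowerSeries.X * f + PowerSeries.C ρ * PowerSeries.X * f ^ 2)
    (hg : g = 1 + PowerSeries.C β * PowerSeries.X * g -
      PowerSeries.C (β * ρ) * PowerSeries.X * f * g) :
    ∀ n k : ℕ,
      PowerSeries.coeff n (CS L (fun _ => a) k) =
          PowerSeries.coeff n (Ccand a ρ β f g k) ∧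
        PowerSeries.coeff n (DS L (fun _ => a) k) =
          PowerSeries.coeff n (Dcand ρ f g k) := by
  set b := (starRingEnd ℂ) a with hbdef
  -- actual relations
  have hact1 : ∀ n k : ℕ, PowerSeries.coeff (n + 1) (CS L (fun _ => a) k) =
      PowerSeries.coeff n (CS L (fun _ => a) (k + 1)) +
        a * PowerSeries.coeff n (DS L (fun _ => a) k) := by
    intro n k
    have h := cC1 L (fun _ => a) k n
    linear_combination -h
  have hact2 : ∀ n k : ℕ, PowerSeries.coeff n (DS L (fun _ => a) (k + 1)) =
      PowerSeries.coeff n (DS L (fun _ => a) k) -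
        b * PowerSeries.coeff (n + 1) (CS L (fun _ => a) k) :=
    fun n k => cD1 L (fun _ => a) k n
  have hC0act : ∀ k : ℕ, PowerSeries.coeff 0 (CS L (fun _ => a) (k + 1)) = 0 :=
    fun k => cC0 L (fun _ => a) hLbar k
  have hC00act : PowerSeries.coeff 0 (CS L (fun _ => a) 0) = 1 := cC00 L (fun _ => a) hL1
  -- candidate relations
  have hcand1 := candR1 a b ρ β f g hρ hba hf hg
  have hcand2 := candR2 a b ρ β f g hρ hba hf hg
  have hC0cand : ∀ k : ℕ, PowerSeries.coeff 0 (Ccand a ρ β f g (k + 1)) = 0 :=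
    fun k => cc0_Ccand_succ a b ρ β f g hρ hba hf k
  have hC00cand : PowerSeries.coeff 0 (Ccand a ρ β f g 0) = 1 := cc0_Ccand0 a ρ β f g hg
  -- the D series agree at level 0 with the C series
  have hD0act : ∀ n : ℕ, PowerSeries.coeff n (DS L (fun _ => a) 0) =
      PowerSeries.coeff n (CS L (fun _ => a) 0) := by
    intro n
    simp only [DS, CS, PowerSeries.coeff_mk, Nat.cast_zero, sub_zero, szego_zero,
      Polynomial.toLaurent_one, bar_one]
  have hD0cand : ∀ n : ℕ, PowerSeries.coeff n (Dcand ρ f g 0) =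
      PowerSeries.coeff n (Ccand a ρ β f g 0) := by
    intro n
    simp only [Dcand, Ccand, pow_zero, mul_one]
  -- main double induction
  intro n
  induction n with
  | zero =>
      have hCz : ∀ k : ℕ, PowerSeries.coeff 0 (CS L (fun _ => a) k) =
          PowerSeries.coeff 0 (Ccand a ρ β f g k) := by
        intro k
        rcases k with _ | k
        · rw [hC00act, hC00cand]
        · rw [hC0act k, hC0cand k]
      intro k
      refine ⟨hCz k, ?_⟩
      induction k with
      | zero => rw [hD0act, hD0cand, hCz 0]
      | succ k ihk =>
          rw [hact2 0 k, hcand2 0 k, ihk, hact1 0 k, hcand1 0 k, hCz (k + 1), ihk]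
  | succ n ihn =>
      have hCs : ∀ k : ℕ, PowerSeries.coeff (n + 1) (CS L (fun _ => a) k) =
          PowerSeries.coeff (n + 1) (Ccand a ρ β f g k) := by
        intro k
        rw [hact1 n k, hcand1 n k, (ihn (k + 1)).1, (ihn k).2]
      intro k
      refine ⟨hCs k, ?_⟩
      induction k with
      | zero => rw [hD0act, hD0cand, hCs 0]
      | succ k ihk =>
          rw [hact2 (n + 1) k, hcand2 (n + 1) k, ihk, hact1 (n + 1) k, hcand1 (n + 1) k,
            hCs (k + 1), ihk]


lemma CS0_eq_g (hL1 : L 1 = 1)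
    (hLbar : ∀ k : ℕ, 1 ≤ k → L (polyBarInv (szego (fun _ => a) k)) = 0)
    (hρ : ρ = 1 - a * (starRingEnd ℂ) a) (hba : β * (starRingEnd ℂ) a = 1)
    (hf : f = 1 - PowerSeries.X * f + PowerSeries.C ρ * PowerSeries.X * f ^ 2)
    (hg : g = 1 + PowerSeries.C β * PowerSeries.X * g -
      PowerSeries.C (β * ρ) * PowerSeries.X * f * g) :
    CS L (fun _ => a) 0 = g := by
  refine PowerSeries.ext fun n => ?_
  have h := (main_CD L a ρ β f g hL1 hLbar hρ hba hf hg n 0).1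
  rw [h]
  rfl

lemma coeff0_Bcand (m : ℕ) : PowerSeries.constantCoeff (Bcand ρ β f g m) = ρ ^ m := by
  simp [Bcand]

lemma main_AB (hL1 : L 1 = 1)
    (hLphi : ∀ k : ℕ, 1 ≤ k → L (Polynomial.toLaurent (szego (fun _ => a) k)) = 0)
    (hLbar : ∀ k : ℕ, 1 ≤ k → L (polyBarInv (szego (fun _ => a) k)) = 0)
    (hρ : ρ = 1 - a * (starRingEnd ℂ) a) (hba : β * (starRingEnd ℂ) a = 1)
    (hf : f = 1 - PowerSeries.X * f + PowerSeries.C ρ * PowerSeries.X * f ^ 2)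
    (hg : g = 1 + PowerSeries.C β * PowerSeries.X * g -
      PowerSeries.C (β * ρ) * PowerSeries.X * f * g) :
    ∀ m : ℕ, AS L (fun _ => a) m = Acand ρ f g m ∧ BS L (fun _ => a) m = Bcand ρ β f g m := by
  set b := (starRingEnd ℂ) a with hbdef
  have hg0 : CS L (fun _ => a) 0 = g := CS0_eq_g L a ρ β f g hL1 hLbar hρ hba hf hg
  intro m
  induction m with
  | zero =>
      constructor
      · rw [AS0_eq_CS0, hg0]
        simp [Acand]
      · rw [BS0_eq_CS0, hg0]
        have : Bcand ρ β f g 0 = g := by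
          simp only [Bcand, pow_zero, one_mul, mul_one]
          linear_combination -alg_I1 ρ β f g hg
        rw [this]
  | succ m ih =>
      have hBS0 : PowerSeries.coeff 0 (BS L (fun _ => a) m) = ρ ^ m := by
        rw [ih.2, PowerSeries.coeff_zero_eq_constantCoeff, coeff0_Bcand]
      have hCb : (PowerSeries.C b) * (PowerSeries.C ρ) ^ m =
          PowerSeries.C (b * ρ ^ m) := by
        rw [map_mul, map_pow]
      have stepA : AS L (fun _ => a) (m + 1) =
          PowerSeries.X * AS L (fun _ => a) m - PowerSeries.C b * BS L (fun _ => a) m +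
            PowerSeries.C b * (PowerSeries.C ρ) ^ m := by
        refine PowerSeries.ext fun n => ?_
        rcases n with _ | n
        · rw [cA0 L (fun _ => a) hLphi m, map_add, map_sub, PowerSeries.coeff_zero_X_mul,
            PowerSeries.coeff_C_mul, hBS0, hCb, PowerSeries.coeff_zero_eq_constantCoeff,
            PowerSeries.constantCoeff_C]
          ring
        · rw [cA1 L (fun _ => a) m n, map_add, map_sub, PowerSeries.coeff_succ_X_mul,
            PowerSeries.coeff_C_mul, hCb, PowerSeries.coeff_C]
          simp [hbdef]
      have stepB : BS L (fun _ => a) (m + 1) =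
          BS L (fun _ => a) m - PowerSeries.C a * (PowerSeries.X * AS L (fun _ => a) m) -
            PowerSeries.C a * PowerSeries.C b * (PowerSeries.C ρ) ^ m := by
        refine PowerSeries.ext fun n => ?_
        rcases n with _ | n
        · rw [cB0 L (fun _ => a) hLphi m, map_sub, map_sub, PowerSeries.coeff_C_mul,
            PowerSeries.coeff_zero_X_mul, hBS0, mul_assoc, hCb, PowerSeries.coeff_C_mul,
            PowerSeries.coeff_zero_eq_constantCoeff, PowerSeries.constantCoeff_C]
          ring
        · rw [cB1 L (fun _ => a) m n, map_sub, map_sub, PowerSeries.coeff_C_mul,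
            PowerSeries.coeff_succ_X_mul, mul_assoc, hCb, PowerSeries.coeff_C_mul,
            PowerSeries.coeff_C]
          simp
      constructor
      · rw [stepA, ih.1, ih.2, ← candArec b ρ β f g hba m]
      · rw [stepB, ih.1, ih.2, ← candBrec a b ρ β f g hρ hba hf m]

end Main

end Ger

/-- Geronimus polynomials: with constant Verblunsky coefficients
`α_n = α`, `0 < |α| < 1`, and `f, g` the formal power series satisfying the stated
functional equations, for every `m ≥ 0` one has `Σ_{n≥0} μ_{n,m} zⁿ = g·(z·f)^m`. -/
theorem geronimus_generating_function (α : ℂ) (hα0 : α ≠ 0) (hα1 : ‖α‖ < 1)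
    (L : LaurentPolynomial ℂ →ₗ[ℂ] ℂ) (hL1 : L 1 = 1)
    (hLphi : ∀ k : ℕ, 1 ≤ k → L (Polynomial.toLaurent (szego (fun _ => α) k)) = 0)
    (hLbar : ∀ k : ℕ, 1 ≤ k → L (polyBarInv (szego (fun _ => α) k)) = 0)
    (f g : PowerSeries ℂ)
    (hf : f = 1 - PowerSeries.X * f +
        PowerSeries.C ((1 - Complex.normSq α : ℝ) : ℂ) * PowerSeries.X * f ^ 2)
    (hg : g = 1 + PowerSeries.C (α / ((Complex.normSq α : ℝ) : ℂ)) * PowerSeries.X * g -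
        PowerSeries.C (α / ((Complex.normSq α : ℝ) : ℂ) * ((1 - Complex.normSq α : ℝ) : ℂ)) *
          PowerSeries.X * f * g)
    (m : ℕ) :
    PowerSeries.mk (fun n : ℕ => genMom L (fun _ => α) (n : ℤ) 0 m) =
      g * (PowerSeries.X * f) ^ m := by
  set ρ : ℂ := ((1 - Complex.normSq α : ℝ) : ℂ) with hρdef
  set β : ℂ := α / ((Complex.normSq α : ℝ) : ℂ) with hβdef
  have hns0 : ((Complex.normSq α : ℝ) : ℂ) ≠ 0 := by
    rw [Complex.ofReal_ne_zero]
    exact fun h => hα0 (Complex.normSq_eq_zero.mp h)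
  have hρ : ρ = 1 - α * (starRingEnd ℂ) α := by
    rw [hρdef, Complex.mul_conj]
    push_cast
    ring
  have hba : β * (starRingEnd ℂ) α = 1 := by
    rw [hβdef, div_mul_eq_mul_div, Complex.mul_conj]
    exact div_self hns0
  have hρ0 : ρ ≠ 0 := by
    rw [hρdef, Complex.ofReal_ne_zero]
    have h1 : Complex.normSq α < 1 := by
      have := Complex.sq_norm α
      nlinarith [norm_nonneg α]
    intro h
    nlinarith
  have hAS := (Ger.main_AB L α ρ β f g hL1 hLphi hLbar hρ hba hf hg m).1
  refine PowerSeries.ext fun n => ?_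
  rw [PowerSeries.coeff_mk]
  have hgen : genMom L (fun _ => α) (n : ℤ) 0 m =
      PowerSeries.coeff n (Ger.AS L (fun _ => α) m) / ρ ^ m := by
    unfold genMom Ger.AS
    rw [PowerSeries.coeff_mk]
    congr 1
    · rw [Ger.szego_zero, Polynomial.toLaurent_one, mul_one, Ger.bar_T, mul_comm]
    · rw [Finset.prod_const, Finset.card_range]
  rw [hgen, hAS]
  unfold Ger.Acand
  rw [← map_pow, PowerSeries.coeff_C_mul]
  field_simp

end
end

section
/- (Single nontrivial moment, 0 < a < 1.) Let a ∈ (0,1), set u = a^{-1} + √(a^{-2}-1) (a real number with u > 1), and set α_n = -(u-u^{-1})/(u^{n+2}-u^{-(n+2)}) for all n ≥ 0 (one has |α_n| < 1). Then for all nonnegative integers n and m: μ_{n,m} = 1 if m = n; μ_{n,m} = -(u^n-u^{-n})/(u^{n+1}-u^{-(n+1)}) if m = n-1; and μ_{n,m} = 0 otherwise. -/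
open Polynomial LaurentPolynomial Finset

noncomputable section

namespace SNM

def Sf (u : ℝ) (k : ℕ) : ℝ := u ^ k - u⁻¹ ^ k

def ph (u : ℝ) (m j : ℕ) : ℝ :=
  if j ≤ m then Sf u (j + 1) / Sf u (m + 1) else 0

def mo (u : ℝ) (e : ℤ) : ℝ :=
  if e = 0 then 1 else if e = 1 ∨ e = -1 then -(Sf u 1 / Sf u 2) else 0

variable {u : ℝ}

lemma u0 (hu : 1 < u) : (0:ℝ) < u := lt_trans one_pos hu

lemma Sf_pos (hu : 1 < u) {k : ℕ} (hk : k ≠ 0) : 0 < Sf u k := by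
  have h1 : u⁻¹ < u := lt_trans (inv_lt_one_of_one_lt₀ hu) hu
  have := pow_lt_pow_left₀ h1 (inv_nonneg.mpr (u0 hu).le) hk
  unfold Sf; linarith

lemma Sf_ne (hu : 1 < u) {k : ℕ} (hk : k ≠ 0) : Sf u k ≠ 0 := (Sf_pos hu hk).ne'

lemma key (hu : 1 < u) (j d : ℕ) :
    Sf u j * Sf u (j + d + 1) + Sf u 1 * Sf u d = Sf u (j + 1) * Sf u (j + d) := by
  have hne : u ≠ 0 := (u0 hu).ne'
  have hj : u ^ j * u⁻¹ ^ j = 1 := by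
    rw [← mul_pow, mul_inv_cancel₀ hne, one_pow]
  simp only [Sf, pow_add, pow_one]
  linear_combination (u * u⁻¹ ^ d + u⁻¹ * u ^ d - u⁻¹ * u⁻¹ ^ d - u * u ^ d) * hj

variable {α : ℕ → ℂ}

lemma conj_α (hα : ∀ n, α n = ((-(Sf u 1 / Sf u (n + 2)) : ℝ) : ℂ)) (n : ℕ) :
    (starRingEnd ℂ) (α n) = α n := by
  rw [hα]; exact Complex.conj_ofReal _

lemma revAt_gt {N i : ℕ} (h : N < i) : revAt N i = i := by
  exact Polynomial.revAt_eq_self_of_lt h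

lemma szego_coeff (hu : 1 < u) (hα : ∀ n, α n = ((-(Sf u 1 / Sf u (n + 2)) : ℝ) : ℂ)) :
    ∀ m j, (szego α m).coeff j = ((ph u m j : ℝ) : ℂ) := by
  intro m
  induction m with
  | zero =>
    intro j
    rcases Nat.eq_zero_or_pos j with rfl | hj
    · simp [szego, ph, div_self (Sf_ne hu one_ne_zero)]
    · have hj' : j ≠ 0 := hj.ne'
      simp [szego, ph, Polynomial.coeff_one, hj', Nat.le_zero]
  | succ m ih =>
    intro j
    have hrec : szego α (m+1) = Polynomial.X * szego α m -
        Polynomial.C ((starRingEnd ℂ) (α m)) *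
          Polynomial.reflect m ((szego α m).map (starRingEnd ℂ)) := rfl
    rw [hrec, Polynomial.coeff_sub, Polynomial.coeff_C_mul, Polynomial.coeff_reflect,
      Polynomial.coeff_map, ih, Complex.conj_ofReal, conj_α hα, hα]
    rcases j with _ | k
    · rw [Polynomial.mul_coeff_zero, Polynomial.coeff_X_zero, zero_mul, Polynomial.revAt_zero]
      have e1 : ph u m m = 1 := by
        rw [ph, if_pos le_rfl, div_self (Sf_ne hu (Nat.succ_ne_zero m))]
      have e2 : ph u (m+1) 0 = Sf u 1 / Sf u (m+2) := by
        rw [ph, if_pos (Nat.zero_le _)]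
      rw [e1, e2]
      push_cast
      ring
    · rw [Polynomial.coeff_X_mul, ih]
      by_cases hk : k + 1 ≤ m
      · rw [Polynomial.revAt_le hk]
        have e1 : ph u m k = Sf u (k+1) / Sf u (m+1) := by rw [ph, if_pos (by omega)]
        have e2 : ph u m (m - (k+1)) = Sf u (m - k) / Sf u (m+1) := by
          rw [ph, if_pos (by omega), show m - (k+1) + 1 = m - k by omega]
        have e3 : ph u (m+1) (k+1) = Sf u (k+2) / Sf u (m+2) := by
          rw [ph, if_pos (by omega)]
        rw [e1, e2, e3]
        have hid : Sf u (k+1)/Sf u (m+1) - (-(Sf u 1/Sf u (m+2))) * (Sf u (m-k)/Sf u (m+1))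
            = Sf u (k+2)/Sf u (m+2) := by
          have K := key hu (k+1) (m-k)
          rw [show k+1+(m-k)+1 = m+2 by omega, show k+1+(m-k) = m+1 by omega] at K
          have h1 := Sf_ne hu (show m+1 ≠ 0 by omega)
          have h2 := Sf_ne hu (show m+2 ≠ 0 by omega)
          field_simp
          linear_combination K
        exact_mod_cast hid
      · rw [revAt_gt (by omega)]
        by_cases hk2 : k = m
        · subst hk2
          have e1 : ph u k k = 1 := by
            rw [ph, if_pos le_rfl, div_self (Sf_ne hu (Nat.succ_ne_zero k))]
          have e2 : ph u k (k+1) = 0 := by rw [ph, if_neg (by omega)]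
          have e3 : ph u (k+1) (k+1) = 1 := by
            rw [ph, if_pos le_rfl, div_self (Sf_ne hu (Nat.succ_ne_zero (k+1)))]
          rw [e1, e2, e3]
          push_cast; ring
        · have e1 : ph u m k = 0 := by rw [ph, if_neg (by omega)]
          have e2 : ph u m (k+1) = 0 := by rw [ph, if_neg (by omega)]
          have e3 : ph u (m+1) (k+1) = 0 := by rw [ph, if_neg (by omega)]
          rw [e1, e2, e3]
          push_cast; ring


lemma szego_eq (hu : 1 < u) (hα : ∀ n, α n = ((-(Sf u 1 / Sf u (n + 2)) : ℝ) : ℂ)) (m : ℕ) :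
    szego α m = ∑ j ∈ Finset.range (m+1), Polynomial.C ((ph u m j : ℝ) : ℂ) * Polynomial.X ^ j := by
  ext j
  rw [szego_coeff hu hα, Polynomial.finset_sum_coeff]
  simp only [Polynomial.coeff_C_mul, Polynomial.coeff_X_pow, mul_ite, mul_one, mul_zero]
  rw [Finset.sum_ite_eq (Finset.range (m+1)) j fun i => ((ph u m i : ℝ) : ℂ)]
  by_cases hj : j < m + 1
  · rw [if_pos (Finset.mem_range.mpr hj)]
  · rw [if_neg (by simpa using hj), ph, if_neg (by omega)]
    simp

lemma toLaurent_szego (hu : 1 < u) (hα : ∀ n, α n = ((-(Sf u 1 / Sf u (n + 2)) : ℝ) : ℂ)) (m : ℕ) :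
    Polynomial.toLaurent (szego α m)
      = ∑ j ∈ Finset.range (m+1), LaurentPolynomial.C ((ph u m j : ℝ) : ℂ) * T (j:ℤ) := by
  rw [szego_eq hu hα, map_sum]
  refine Finset.sum_congr rfl fun j _ => ?_
  rw [map_mul, Polynomial.toLaurent_C, Polynomial.toLaurent_X_pow]


lemma polyBarInv_sum (s : Finset ℕ) (c : ℕ → ℂ) :
    polyBarInv (∑ j ∈ s, Polynomial.C (c j) * Polynomial.X ^ j)
      = ∑ j ∈ s, LaurentPolynomial.C ((starRingEnd ℂ) (c j)) * T (-(j:ℤ)) := by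
  classical
  induction s using Finset.induction_on with
  | empty => simp [polyBarInv]
  | insert a s hnot ih =>
    rw [Finset.sum_insert hnot, Finset.sum_insert hnot, ← ih]
    unfold polyBarInv
    rw [Polynomial.sum_add_index _ _ _ (fun n => by simp)
      (fun n b c => by rw [map_add, map_add, add_mul])]
    congr 1
    rw [Polynomial.C_mul_X_pow_eq_monomial, Polynomial.sum_monomial_index _ _ (by simp)]

lemma polyBarInv_szego (hu : 1 < u) (hα : ∀ n, α n = ((-(Sf u 1 / Sf u (n + 2)) : ℝ) : ℂ)) (m : ℕ) :
    polyBarInv (szego α m)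
      = ∑ j ∈ Finset.range (m+1), LaurentPolynomial.C ((ph u m j : ℝ) : ℂ) * T (-(j:ℤ)) := by
  rw [szego_eq hu hα, polyBarInv_sum]
  exact Finset.sum_congr rfl fun j _ => by rw [Complex.conj_ofReal]

lemma L_C_T (L : LaurentPolynomial ℂ →ₗ[ℂ] ℂ) (c : ℂ) (e : ℤ) :
    L (LaurentPolynomial.C c * T e) = c * L (T e) := by
  have h : LaurentPolynomial.C c * T e = c • T e := by
    rw [← single_eq_C_mul_T,
      show (T e : LaurentPolynomial ℂ) = AddMonoidAlgebra.single e 1 from rfl,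
      AddMonoidAlgebra.smul_single, smul_eq_mul, mul_one]
  rw [h, map_smul, smul_eq_mul]


variable {L : LaurentPolynomial ℂ →ₗ[ℂ] ℂ}

lemma Lpos (hu : 1 < u) (hα : ∀ n, α n = ((-(Sf u 1 / Sf u (n + 2)) : ℝ) : ℂ))
    (hL1 : L 1 = 1)
    (hLphi : ∀ k : ℕ, 1 ≤ k → L (Polynomial.toLaurent (szego α k)) = 0) :
    ∀ k : ℕ, L (T (k:ℤ)) = ((mo u k : ℝ) : ℂ) := by
  intro k
  induction k using Nat.strong_induction_on with
  | _ k ihk =>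
  rcases k with _ | k
  · rw [show ((0:ℕ):ℤ) = 0 from rfl, T_zero, hL1]
    simp [mo]
  · have h0 := hLphi (k+1) (by omega)
    rw [toLaurent_szego hu hα, map_sum] at h0
    simp only [L_C_T] at h0
    rw [Finset.sum_range_succ] at h0
    have hph1 : ((ph u (k+1) (k+1) : ℝ) : ℂ) = 1 := by
      rw [ph, if_pos le_rfl, div_self (Sf_ne hu (Nat.succ_ne_zero (k+1)))]
      norm_num
    rw [hph1, one_mul] at h0
    have hsum : ∑ j ∈ Finset.range (k+1), ((ph u (k+1) j : ℝ) : ℂ) * L (T (j:ℤ))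
        = ∑ j ∈ Finset.range (k+1), ((ph u (k+1) j * mo u j : ℝ) : ℂ) := by
      refine Finset.sum_congr rfl fun j hj => ?_
      rw [ihk j (Finset.mem_range.mp hj)]
      push_cast; ring
    rw [hsum] at h0
    have hLval : L (T ((k+1:ℕ):ℤ))
        = -∑ j ∈ Finset.range (k+1), ((ph u (k+1) j * mo u j : ℝ) : ℂ) :=
      eq_neg_of_add_eq_zero_right h0
    rcases k with _ | s
    · rw [hLval, Finset.sum_range_one]
      have e : ph u 1 0 * mo u ((0:ℕ):ℤ) = Sf u 1 / Sf u 2 := by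
        rw [ph, if_pos (by omega), mo, if_pos (by norm_num : ((0:ℕ):ℤ) = 0), mul_one]
      rw [e, mo, if_neg (by omega), if_pos (by norm_num)]
      push_cast; ring
    · rw [hLval, Finset.sum_range_succ', Finset.sum_range_succ']
      have hz : ∀ i ∈ Finset.range s, ((ph u (s+2) (i+1+1) * mo u ((i+1+1:ℕ):ℤ) : ℝ) : ℂ) = 0 := by
        intro i _
        rw [mo, if_neg (by omega), if_neg (by omega), mul_zero]
        norm_num
      rw [Finset.sum_eq_zero hz, zero_add]
      have e1 : ph u (s+2) (0+1) * mo u ((0+1:ℕ):ℤ) = -(Sf u 1 / Sf u (s+3)) := by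
        rw [ph, if_pos (by omega), mo, if_neg (by omega), if_pos (by norm_num)]
        have h2 := Sf_ne hu (show (2:ℕ) ≠ 0 by omega)
        have h3 := Sf_ne hu (show s+1+1+1 ≠ 0 by omega)
        rw [show (0:ℕ)+1+1 = 2 from rfl]
        field_simp
      have e0 : ph u (s+2) 0 * mo u ((0:ℕ):ℤ) = Sf u 1 / Sf u (s+3) := by
        rw [ph, if_pos (by omega), mo, if_pos (by norm_num : ((0:ℕ):ℤ) = 0), mul_one]
      rw [e1, e0, mo, if_neg (by omega), if_neg (by omega)]
      push_cast; ring

lemma Lneg (hu : 1 < u) (hα : ∀ n, α n = ((-(Sf u 1 / Sf u (n + 2)) : ℝ) : ℂ))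
    (hL1 : L 1 = 1)
    (hLbar : ∀ k : ℕ, 1 ≤ k → L (polyBarInv (szego α k)) = 0) :
    ∀ k : ℕ, L (T (-(k:ℤ))) = ((mo u k : ℝ) : ℂ) := by
  intro k
  induction k using Nat.strong_induction_on with
  | _ k ihk =>
  rcases k with _ | k
  · rw [show (-((0:ℕ):ℤ)) = 0 from rfl, T_zero, hL1]
    simp [mo]
  · have h0 := hLbar (k+1) (by omega)
    rw [polyBarInv_szego hu hα, map_sum] at h0
    simp only [L_C_T] at h0
    rw [Finset.sum_range_succ] at h0
    have hph1 : ((ph u (k+1) (k+1) : ℝ) : ℂ) = 1 := by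
      rw [ph, if_pos le_rfl, div_self (Sf_ne hu (Nat.succ_ne_zero (k+1)))]
      norm_num
    rw [hph1, one_mul] at h0
    have hsum : ∑ j ∈ Finset.range (k+1), ((ph u (k+1) j : ℝ) : ℂ) * L (T (-(j:ℤ)))
        = ∑ j ∈ Finset.range (k+1), ((ph u (k+1) j * mo u j : ℝ) : ℂ) := by
      refine Finset.sum_congr rfl fun j hj => ?_
      rw [ihk j (Finset.mem_range.mp hj)]
      push_cast; ring
    rw [hsum] at h0
    have hLval : L (T (-((k+1:ℕ):ℤ)))
        = -∑ j ∈ Finset.range (k+1), ((ph u (k+1) j * mo u j : ℝ) : ℂ) :=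
      eq_neg_of_add_eq_zero_right h0
    rcases k with _ | s
    · rw [hLval, Finset.sum_range_one]
      have e : ph u 1 0 * mo u ((0:ℕ):ℤ) = Sf u 1 / Sf u 2 := by
        rw [ph, if_pos (by omega), mo, if_pos (by norm_num : ((0:ℕ):ℤ) = 0), mul_one]
      rw [e, mo, if_neg (by omega), if_pos (by norm_num)]
      push_cast; ring
    · rw [hLval, Finset.sum_range_succ', Finset.sum_range_succ']
      have hz : ∀ i ∈ Finset.range s, ((ph u (s+2) (i+1+1) * mo u ((i+1+1:ℕ):ℤ) : ℝ) : ℂ) = 0 := by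
        intro i _
        rw [mo, if_neg (by omega), if_neg (by omega), mul_zero]
        norm_num
      rw [Finset.sum_eq_zero hz, zero_add]
      have e1 : ph u (s+2) (0+1) * mo u ((0+1:ℕ):ℤ) = -(Sf u 1 / Sf u (s+3)) := by
        rw [ph, if_pos (by omega), mo, if_neg (by omega), if_pos (by norm_num)]
        have h2 := Sf_ne hu (show (2:ℕ) ≠ 0 by omega)
        have h3 := Sf_ne hu (show s+1+1+1 ≠ 0 by omega)
        rw [show (0:ℕ)+1+1 = 2 from rfl]
        field_simp
      have e0 : ph u (s+2) 0 * mo u ((0:ℕ):ℤ) = Sf u 1 / Sf u (s+3) := by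
        rw [ph, if_pos (by omega), mo, if_pos (by norm_num : ((0:ℕ):ℤ) = 0), mul_one]
      rw [e1, e0, mo, if_neg (by omega), if_neg (by omega)]
      push_cast; ring

lemma LT (hu : 1 < u) (hα : ∀ n, α n = ((-(Sf u 1 / Sf u (n + 2)) : ℝ) : ℂ))
    (hL1 : L 1 = 1)
    (hLphi : ∀ k : ℕ, 1 ≤ k → L (Polynomial.toLaurent (szego α k)) = 0)
    (hLbar : ∀ k : ℕ, 1 ≤ k → L (polyBarInv (szego α k)) = 0) :
    ∀ e : ℤ, L (T e) = ((mo u e : ℝ) : ℂ) := by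
  intro e
  obtain ⟨k, rfl | rfl⟩ := Int.eq_nat_or_neg e
  · exact Lpos hu hα hL1 hLphi k
  · rw [Lneg hu hα hL1 hLbar k]
    have : mo u (-(k:ℤ)) = mo u (k:ℤ) := by
      rcases Nat.lt_or_ge k 2 with h | h
      · interval_cases k <;> norm_num [mo]
      · rw [mo, mo, if_neg (by omega), if_neg (by omega), if_neg (by omega), if_neg (by omega)]
    rw [this]


lemma kappa (hu : 1 < u) (hα : ∀ n, α n = ((-(Sf u 1 / Sf u (n + 2)) : ℝ) : ℂ)) (m : ℕ) :
    ∏ j ∈ Finset.range m, ((1 - Complex.normSq (α j) : ℝ) : ℂ)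
      = ((Sf u 1 * Sf u (m+2) / (Sf u 2 * Sf u (m+1)) : ℝ) : ℂ) := by
  induction m with
  | zero =>
    rw [Finset.prod_range_zero]
    have h1 := Sf_ne hu (show (1:ℕ) ≠ 0 by omega)
    have h2 := Sf_ne hu (show (2:ℕ) ≠ 0 by omega)
    rw [show Sf u 1 * Sf u (0+2) / (Sf u 2 * Sf u (0+1)) = 1 by
      rw [show (0:ℕ)+2 = 2 from rfl, show (0:ℕ)+1 = 1 from rfl,
        mul_comm (Sf u 2) (Sf u 1), div_self (mul_ne_zero h1 h2)]]
    norm_num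
  | succ m ih =>
    rw [Finset.prod_range_succ, ih, hα m, Complex.normSq_ofReal, ← Complex.ofReal_mul]
    rw [Complex.ofReal_inj, show m+1+2 = m+3 from rfl, show m+1+1 = m+2 from rfl]
    have h1 := Sf_ne hu (show (1:ℕ) ≠ 0 by omega)
    have h2 := Sf_ne hu (show (2:ℕ) ≠ 0 by omega)
    have h3 := Sf_ne hu (show m+1 ≠ 0 by omega)
    have h4 := Sf_ne hu (show m+2 ≠ 0 by omega)
    have h5 := Sf_ne hu (show m+3 ≠ 0 by omega)
    have K := key hu (m+1) 1
    rw [show m+1+1+1 = m+3 from rfl, show m+1+1 = m+2 from rfl] at K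
    field_simp
    linear_combination -K

end SNM

open SNM in
/-- single nontrivial moment, `0 < a < 1`: with
`u = a⁻¹ + √(a⁻² - 1)` and `α_n = -(u-u⁻¹)/(u^{n+2}-u^{-(n+2)})`, the moments are
`μ_{n,n} = 1`, `μ_{n,n-1} = -(uⁿ-u⁻ⁿ)/(u^{n+1}-u^{-(n+1)})`, and `μ_{n,m} = 0`
otherwise. -/
theorem single_nontrivial_moment (a u : ℝ) (ha0 : 0 < a) (ha1 : a < 1)
    (hu : u = a⁻¹ + Real.sqrt (a⁻¹ ^ 2 - 1)) (α : ℕ → ℂ)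
    (hαdef : α = fun n : ℕ =>
      ((-((u - u⁻¹) / (u ^ ((n : ℤ) + 2) - u ^ (-((n : ℤ) + 2)))) : ℝ) : ℂ))
    (L : LaurentPolynomial ℂ →ₗ[ℂ] ℂ) (hL1 : L 1 = 1)
    (hLphi : ∀ k : ℕ, 1 ≤ k → L (Polynomial.toLaurent (szego α k)) = 0)
    (hLbar : ∀ k : ℕ, 1 ≤ k → L (polyBarInv (szego α k)) = 0) :
    ∀ n m : ℕ,
      genMom L α n 0 m =
        if m = n then 1
        else if (m : ℤ) = (n : ℤ) - 1 then
          ((-((u ^ (n : ℤ) - u ^ (-(n : ℤ))) /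
              (u ^ ((n : ℤ) + 1) - u ^ (-((n : ℤ) + 1)))) : ℝ) : ℂ)
        else 0 := by
  intro n m
  have hainv : 1 < a⁻¹ := (one_lt_inv₀ ha0).mpr ha1
  have hu1 : 1 < u := by
    have := Real.sqrt_nonneg (a⁻¹ ^ 2 - 1)
    rw [hu]; linarith
  have hune : u ≠ 0 := (u0 hu1).ne'
  have hzp : ∀ k : ℕ, u ^ ((k:ℕ):ℤ) = u ^ k := fun k => zpow_natCast u k
  have hzn : ∀ k : ℕ, u ^ (-((k:ℕ):ℤ)) = u⁻¹ ^ k := fun k => by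
    rw [zpow_neg, zpow_natCast, inv_pow]
  have hα' : ∀ j : ℕ, α j = ((-(Sf u 1 / Sf u (j + 2)) : ℝ) : ℂ) := by
    intro j
    simp only [hαdef]
    congr 1
    have e1 : u ^ ((j:ℤ) + 2) = u ^ (j + 2 : ℕ) := by
      rw [show ((j:ℤ) + 2) = ((j + 2 : ℕ) : ℤ) by push_cast; ring, zpow_natCast]
    have e2 : u ^ (-((j:ℤ) + 2)) = u⁻¹ ^ (j + 2 : ℕ) := by
      rw [show ((j:ℤ) + 2) = ((j + 2 : ℕ) : ℤ) by push_cast; ring, zpow_neg, zpow_natCast, inv_pow]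
    rw [e1, e2, Sf, Sf, pow_one, pow_one]
  have h1 := Sf_ne hu1 (show (1:ℕ) ≠ 0 by omega)
  have h2 := Sf_ne hu1 (show (2:ℕ) ≠ 0 by omega)
  have hm1 := Sf_ne hu1 (show m + 1 ≠ 0 by omega)
  have hm2 := Sf_ne hu1 (show m + 2 ≠ 0 by omega)
  have mo0 : mo u 0 = 1 := by simp [mo]
  have mo1 : mo u 1 = -(Sf u 1 / Sf u 2) := by norm_num [mo]
  have mon1 : mo u (-1) = -(Sf u 1 / Sf u 2) := by norm_num [mo]
  have hbar : laurentBarInv (LaurentPolynomial.T (n:ℤ) * Polynomial.toLaurent (szego α 0))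
      = LaurentPolynomial.T (-(n:ℤ)) := by
    have h0 : szego α 0 = 1 := rfl
    rw [h0, map_one, mul_one, laurentBarInv,
      show (LaurentPolynomial.T (n:ℤ) : LaurentPolynomial ℂ) = AddMonoidAlgebra.single (n:ℤ) 1 from rfl,
      AddMonoidAlgebra.coeff_single,
      Finsupp.sum_single_index (by simp)]
    simp
  have hmain : L (Polynomial.toLaurent (szego α m) * LaurentPolynomial.T (-(n:ℤ)))
      = ∑ j ∈ Finset.range (m+1), ((ph u m j * mo u ((j:ℤ) - (n:ℤ)) : ℝ) : ℂ) := by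
    rw [toLaurent_szego hu1 hα', Finset.sum_mul, map_sum]
    refine Finset.sum_congr rfl fun j hj => ?_
    rw [mul_assoc, ← T_add, show (j:ℤ) + -(n:ℤ) = (j:ℤ) - (n:ℤ) by ring, L_C_T,
      LT hu1 hα' hL1 hLphi hLbar]
    push_cast; ring
  have hsumcast : ∑ j ∈ Finset.range (m+1), ((ph u m j * mo u ((j:ℤ) - (n:ℤ)) : ℝ) : ℂ)
      = (((∑ j ∈ Finset.range (m+1), ph u m j * mo u ((j:ℤ) - (n:ℤ))) : ℝ) : ℂ) := by
    push_cast; rfl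
  rw [genMom, hbar, hmain, hsumcast, kappa hu1 hα' m, ← Complex.ofReal_div]
  have hKne : Sf u 1 * Sf u (m+2) / (Sf u 2 * Sf u (m+1)) ≠ 0 :=
    div_ne_zero (mul_ne_zero h1 hm2) (mul_ne_zero h2 hm1)
  by_cases hc1 : m = n
  · subst hc1
    rw [if_pos rfl]
    have htot : (∑ j ∈ Finset.range (m+1), ph u m j * mo u ((j:ℤ) - (m:ℤ)))
        = Sf u 1 * Sf u (m+2) / (Sf u 2 * Sf u (m+1)) := by
      rw [Finset.sum_range_succ, show (m:ℤ) - (m:ℤ) = 0 by ring, mo0,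
        ph, if_pos le_rfl, div_self (Sf_ne hu1 (Nat.succ_ne_zero m)), one_mul]
      rcases m with _ | s
      · rw [Finset.sum_range_zero, show (0:ℕ)+2 = 2 from rfl, show (0:ℕ)+1 = 1 from rfl,
          mul_comm (Sf u 2) (Sf u 1), div_self (mul_ne_zero h1 h2)]
        norm_num
      · rw [Finset.sum_range_succ, Finset.sum_eq_zero (fun j hj => by
          have := Finset.mem_range.mp hj
          rw [mo, if_neg (by omega), if_neg (by omega), mul_zero]), zero_add,
          show ((s:ℕ):ℤ) - ((s+1:ℕ):ℤ) = -1 by push_cast; ring, mon1, ph, if_pos (by omega)]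
        have K := key hu1 1 (s+1)
        rw [show 1+(s+1)+1 = s+3 from by omega, show 1+(s+1) = s+2 from by omega,
          show (1:ℕ)+1 = 2 from rfl] at K
        have hs1 := Sf_ne hu1 (show s + 1 ≠ 0 by omega)
        have hs2 := Sf_ne hu1 (show s + 2 ≠ 0 by omega)
        have hs3 := Sf_ne hu1 (show s + 3 ≠ 0 by omega)
        rw [show s+1+1 = s+2 from rfl, show s+1+2 = s+3 from rfl]
        field_simp
        linear_combination -K
    rw [htot, div_self hKne, Complex.ofReal_one]
  · by_cases hc2 : (m:ℤ) = (n:ℤ) - 1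
    · have hn : n = m + 1 := by omega
      subst hn
      rw [if_neg hc1, if_pos hc2]
      have htot : (∑ j ∈ Finset.range (m+1), ph u m j * mo u ((j:ℤ) - ((m+1:ℕ):ℤ)))
          = -(Sf u 1 / Sf u 2) := by
        rw [Finset.sum_range_succ, Finset.sum_eq_zero (fun j hj => by
          have := Finset.mem_range.mp hj
          rw [mo, if_neg (by omega), if_neg (by omega), mul_zero]), zero_add,
          show ((m:ℕ):ℤ) - ((m+1:ℕ):ℤ) = -1 by push_cast; ring, mon1,
          ph, if_pos le_rfl, div_self (Sf_ne hu1 (Nat.succ_ne_zero m)), one_mul]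
      rw [htot]
      have eR : -((u ^ ((m+1:ℕ):ℤ) - u ^ (-((m+1:ℕ):ℤ))) /
            (u ^ (((m+1:ℕ):ℤ) + 1) - u ^ (-(((m+1:ℕ):ℤ) + 1))))
          = -(Sf u (m+1) / Sf u (m+2)) := by
        rw [hzp (m+1), hzn (m+1),
          show (((m+1:ℕ):ℤ) + 1) = ((m+2:ℕ):ℤ) by push_cast; ring, hzp (m+2), hzn (m+2)]
        rfl
      rw [eR, Complex.ofReal_inj]
      field_simp
    · rw [if_neg hc1, if_neg hc2]
      have htot : (∑ j ∈ Finset.range (m+1), ph u m j * mo u ((j:ℤ) - (n:ℤ))) = 0 := by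
        rcases (by omega : m + 2 ≤ n ∨ n + 1 ≤ m) with hc | hc
        · exact Finset.sum_eq_zero fun j hj => by
            have := Finset.mem_range.mp hj
            rw [mo, if_neg (by omega), if_neg (by omega), mul_zero]
        · have hsub : ∑ j ∈ Finset.range (m+1), ph u m j * mo u ((j:ℤ) - (n:ℤ))
              = ∑ j ∈ Finset.range (n+2), ph u m j * mo u ((j:ℤ) - (n:ℤ)) :=
            (Finset.sum_subset (Finset.range_subset_range.mpr (by omega)) (fun j hj hnot => by
              have hj1 := Finset.mem_range.mp hj
              have hj2 : ¬ j < n + 2 := fun h => hnot (Finset.mem_range.mpr h)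
              rw [mo, if_neg (by omega), if_neg (by omega), mul_zero])).symm
          rw [hsub, Finset.sum_range_succ, Finset.sum_range_succ]
          rw [show ((n+1:ℕ):ℤ) - (n:ℤ) = 1 by push_cast; ring,
            show ((n:ℕ):ℤ) - (n:ℤ) = 0 by ring, mo0, mo1, mul_one,
            ph, if_pos (by omega), ph, if_pos (by omega)]
          rcases n with _ | s
          · rw [Finset.sum_range_zero, show (0:ℕ)+1 = 1 from rfl, show (0:ℕ)+1+1 = 2 from rfl]
            field_simp
            ring
          · rw [Finset.sum_range_succ, Finset.sum_eq_zero (fun j hj => by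
              have := Finset.mem_range.mp hj
              rw [mo, if_neg (by omega), if_neg (by omega), mul_zero]), zero_add,
              show ((s:ℕ):ℤ) - ((s+1:ℕ):ℤ) = -1 by push_cast; ring, mon1,
              ph, if_pos (by omega)]
            have K := key hu1 1 (s+1)
            rw [show 1+(s+1)+1 = s+3 from by omega, show 1+(s+1) = s+2 from by omega,
              show (1:ℕ)+1 = 2 from rfl] at K
            have hs1 := Sf_ne hu1 (show s + 1 ≠ 0 by omega)
            have hs2 := Sf_ne hu1 (show s + 2 ≠ 0 by omega)
            have hs3 := Sf_ne hu1 (show s + 3 ≠ 0 by omega)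
            rw [show s+1+1 = s+2 from rfl, show s+1+1+1 = s+3 from rfl]
            field_simp
            linear_combination -K
      rw [htot, zero_div, Complex.ofReal_zero]
end
end
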